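/- arXiv:0910.0533 — 5 statements merged into one kernel-verified Lean document; each statement's English description precedes it below -/
import Mathlib

section
/- If D is a non-trivial Steiner t-design with parameters t, k, v, then v ≥ (t+1)(k-t+1). -/
/-- (Tits) If `D` is a non-trivial Steiner `t`-design with parameters
`t, k, v`, then `v ≥ (t+1)(k-t+1)`. -/
theorem stmt_5 {X : Type*} [Fintype X] [DecidableEq X]
    (v k t : ℕ) (ht : 0 < t) (htk : t < k) (hkv : k < v)
    (B : Finset (Finset X))
    (hX : Fintype.card X = v)
    (hblocks : ∀ b ∈ B, b.card = k)
    (hdesign : ∀ T : Finset X, T.card = t → (B.filter (fun b => T ⊆ b)).card = 1) :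
    v ≥ (t + 1) * (k - t + 1) := by
  classical
  -- unique block through each t-set
  have key : ∀ T : Finset X, T.card = t →
      ∃ b, b ∈ B ∧ T ⊆ b ∧ ∀ b' ∈ B, T ⊆ b' → b' = b := by
    intro T hT
    obtain ⟨b, hb⟩ := Finset.card_eq_one.mp (hdesign T hT)
    have hbmem : b ∈ B.filter (fun b => T ⊆ b) := hb ▸ Finset.mem_singleton_self b
    rw [Finset.mem_filter] at hbmem
    refine ⟨b, hbmem.1, hbmem.2, fun b' hb' hTb' => ?_⟩
    have : b' ∈ B.filter (fun b => T ⊆ b) := Finset.mem_filter.mpr ⟨hb', hTb'⟩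
    rwa [hb, Finset.mem_singleton] at this
  -- a block b₀
  obtain ⟨T₀, -, hT₀⟩ := Finset.exists_subset_card_eq
    (show t ≤ (Finset.univ : Finset X).card by rw [Finset.card_univ, hX]; omega)
  obtain ⟨b₀, hb₀B, hT₀b₀, -⟩ := key T₀ hT₀
  have hb₀card : b₀.card = k := hblocks b₀ hb₀B
  -- a point outside b₀
  obtain ⟨x, hx⟩ : ∃ x, x ∉ b₀ := by
    by_contra h
    push_neg at h
    have : b₀ = Finset.univ := Finset.eq_univ_iff_forall.mpr h
    rw [this, Finset.card_univ, hX] at hb₀card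
    omega
  -- a t-subset of b₀
  obtain ⟨T, hTb₀, hT⟩ := Finset.exists_subset_card_eq (show t ≤ b₀.card by omega)
  have hxT : x ∉ T := fun h => hx (hTb₀ h)
  set S : Finset X := insert x T with hSdef
  have hScard : S.card = t + 1 := by rw [hSdef, Finset.card_insert_of_notMem hxT, hT]
  -- S is not contained in any block
  have hSnotin : ∀ b' ∈ B, ¬ S ⊆ b' := by
    intro b' hb' hsub
    obtain ⟨bT, hbTB, hTbT, hbTuniq⟩ := key T hT
    have h1 : b' = bT := hbTuniq b' hb' (fun y hy => hsub (by simp [hSdef, hy]))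
    have h2 : b₀ = bT := hbTuniq b₀ hb₀B hTb₀
    have : x ∈ b' := hsub (by simp [hSdef])
    rw [h1, ← h2] at this
    exact hx this
  -- for each s ∈ S, the unique block through S.erase s
  have hbl : ∀ s ∈ S, ∃ b, b ∈ B ∧ S.erase s ⊆ b ∧ ∀ b' ∈ B, S.erase s ⊆ b' → b' = b := by
    intro s hs
    exact key _ (by rw [Finset.card_erase_of_mem hs, hScard]; omega)
  choose! bl hblB hblsub hbluniq using hbl
  have hsnot : ∀ s ∈ S, s ∉ bl s := by
    intro s hs hmem
    refine hSnotin (bl s) (hblB s hs) (fun y hy => ?_)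
    rcases eq_or_ne y s with rfl | hne
    · exact hmem
    · exact hblsub s hs (Finset.mem_erase.mpr ⟨hne, hy⟩)
  have hint : ∀ s ∈ S, bl s ∩ S = S.erase s := by
    intro s hs
    apply Finset.Subset.antisymm
    · intro y hy
      rw [Finset.mem_inter] at hy
      exact Finset.mem_erase.mpr ⟨fun h => hsnot s hs (h ▸ hy.1), hy.2⟩
    · intro y hy
      exact Finset.mem_inter.mpr ⟨hblsub s hs hy, Finset.mem_of_mem_erase hy⟩
  have hcard_sdiff : ∀ s ∈ S, (bl s \ S).card = k - t := by
    intro s hs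
    have h1 : (bl s \ S).card = (bl s).card - (bl s ∩ S).card := by
      rw [← Finset.sdiff_inter_self_left]
      exact Finset.card_sdiff_of_subset Finset.inter_subset_left
    rw [hblocks _ (hblB s hs), hint s hs, Finset.card_erase_of_mem hs, hScard] at h1
    omega
  -- the outside parts are pairwise disjoint
  have hdisj : ∀ s ∈ S, ∀ s' ∈ S, s ≠ s' → Disjoint (bl s \ S) (bl s' \ S) := by
    intro s hs s' hs' hss'
    rw [Finset.disjoint_left]
    intro y hy hy'
    rw [Finset.mem_sdiff] at hy hy'
    have hyS : y ∉ S := hy.2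
    have hs'es : s' ∈ S.erase s := Finset.mem_erase.mpr ⟨fun h => hss' h.symm, hs'⟩
    set U : Finset X := insert y ((S.erase s).erase s') with hUdef
    have hyU : y ∉ (S.erase s).erase s' :=
      fun h => hyS (Finset.mem_of_mem_erase (Finset.mem_of_mem_erase h))
    have hUcard : U.card = t := by
      rw [hUdef, Finset.card_insert_of_notMem hyU, Finset.card_erase_of_mem hs'es,
        Finset.card_erase_of_mem hs, hScard]
      omega
    have hUs : U ⊆ bl s := by
      intro z hz
      rcases Finset.mem_insert.mp hz with rfl | hz'
      · exact hy.1
      · exact hblsub s hs (Finset.mem_of_mem_erase hz')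
    have hUs' : U ⊆ bl s' := by
      intro z hz
      rcases Finset.mem_insert.mp hz with rfl | hz'
      · exact hy'.1
      · rw [Finset.mem_erase, Finset.mem_erase] at hz'
        exact hblsub s' hs' (Finset.mem_erase.mpr ⟨hz'.1, hz'.2.2⟩)
    obtain ⟨bU, hbUB, -, hbUuniq⟩ := key U hUcard
    have h1 : bl s = bU := hbUuniq _ (hblB s hs) hUs
    have h2 : bl s' = bU := hbUuniq _ (hblB s' hs') hUs'
    have : s' ∈ bl s' := by
      rw [h2, ← h1]
      exact hblsub s hs hs'es
    exact hsnot s' hs' this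
  -- count
  set F : Finset X := S ∪ S.biUnion (fun s => bl s \ S) with hFdef
  have hdisjSU : Disjoint S (S.biUnion (fun s => bl s \ S)) := by
    rw [Finset.disjoint_left]
    intro y hy hy'
    obtain ⟨s, hs, hmem⟩ := Finset.mem_biUnion.mp hy'
    exact (Finset.mem_sdiff.mp hmem).2 hy
  have hFcard : F.card = (t + 1) + (t + 1) * (k - t) := by
    rw [hFdef, Finset.card_union_of_disjoint hdisjSU, Finset.card_biUnion hdisj, hScard]
    congr 1
    rw [Finset.sum_congr rfl hcard_sdiff, Finset.sum_const, hScard, smul_eq_mul]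
  have hFle : F.card ≤ v := by
    rw [← hX, ← Finset.card_univ]
    exact Finset.card_le_univ F
  have hkt : k - t + 1 = (k - t) + 1 := rfl
  calc (t + 1) * (k - t + 1) = (t + 1) + (t + 1) * (k - t) := by ring
    _ ≤ v := by omega
end

section
/- If D is a non-trivial Steiner t-design with parameters t, k, v and t > 2, then v - t + 1 ≥ (k-t+2)(k-t+1). Moreover, if equality holds, then (t,k,v) is one of (3,4,8), (3,6,22), (3,12,112), (4,7,23), or (5,8,24). -/
open Finset

lemma countA {X : Type*} [Fintype X] [DecidableEq X]
    (v k t : ℕ) (B : Finset (Finset X))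
    (hX : Fintype.card X = v)
    (hblocks : ∀ b ∈ B, b.card = k)
    (hdesign : ∀ T : Finset X, T.card = t → (B.filter (fun b => T ⊆ b)).card = 1)
    (i : ℕ) (hi : i ≤ t) (A : Finset X) (hA : A.card = i) :
    (B.filter (fun b => A ⊆ b)).card * (k - i).choose (t - i) = (v - i).choose (t - i) := by
  classical
  set s := B.filter (fun b => A ⊆ b) with hs
  have key : ((univ \ A).powersetCard (t - i)) =
      s.biUnion (fun b => (b \ A).powersetCard (t - i)) := by
    ext u
    simp only [mem_powersetCard, mem_biUnion, hs, mem_filter]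
    constructor
    · rintro ⟨hu, hcard⟩
      have hdisj : Disjoint A u := by
        rw [disjoint_right]
        intro x hx
        exact (mem_sdiff.mp (hu hx)).2
      have hTcard : (A ∪ u).card = t := by
        rw [card_union_of_disjoint hdisj, hA, hcard]
        omega
      obtain ⟨b, hb⟩ := card_eq_one.mp (hdesign (A ∪ u) hTcard)
      have hbmem : b ∈ B.filter (fun b => A ∪ u ⊆ b) := hb ▸ mem_singleton_self b
      simp only [mem_filter] at hbmem
      refine ⟨b, ⟨hbmem.1, subset_union_left.trans hbmem.2⟩, ?_, hcard⟩
      intro x hx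
      exact mem_sdiff.mpr ⟨hbmem.2 (mem_union_right _ hx), (mem_sdiff.mp (hu hx)).2⟩
    · rintro ⟨b, ⟨hbB, hAb⟩, hub, hcard⟩
      exact ⟨hub.trans (sdiff_subset_sdiff (subset_univ b) Subset.rfl), hcard⟩
  have hdisjU : (s : Set (Finset X)).PairwiseDisjoint
      (fun b => (b \ A).powersetCard (t - i)) := by
    intro b hb b' hb' hne
    simp only [Finset.disjoint_left]
    intro u hu hu'
    simp only [mem_powersetCard] at hu hu'
    simp only [hs, mem_coe, mem_filter] at hb hb'
    have hdisj : Disjoint A u := by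
      rw [disjoint_right]
      intro x hx
      exact (mem_sdiff.mp (hu.1 hx)).2
    have hTcard : (A ∪ u).card = t := by
      rw [card_union_of_disjoint hdisj, hA, hu.2]
      omega
    have h1 := hdesign (A ∪ u) hTcard
    have hbm : b ∈ B.filter (fun c => A ∪ u ⊆ c) := by
      simp only [mem_filter]
      exact ⟨hb.1, union_subset hb.2 (hu.1.trans sdiff_subset)⟩
    have hbm' : b' ∈ B.filter (fun c => A ∪ u ⊆ c) := by
      simp only [mem_filter]
      exact ⟨hb'.1, union_subset hb'.2 (hu'.1.trans sdiff_subset)⟩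
    obtain ⟨c, hc⟩ := card_eq_one.mp h1
    rw [hc, mem_singleton] at hbm hbm'
    exact hne (hbm.trans hbm'.symm)
  have hcardU : ((univ \ A).powersetCard (t - i)).card = (v - i).choose (t - i) := by
    rw [card_powersetCard, card_sdiff_of_subset (subset_univ A), card_univ, hX, hA]
  rw [← hcardU, key, card_biUnion hdisjU]
  rw [Finset.sum_congr rfl (fun b hb => ?_), Finset.sum_const, smul_eq_mul]
  simp only [hs, mem_filter] at hb
  rw [card_powersetCard, card_sdiff_of_subset hb.2, hblocks b hb.1, hA]


lemma lamB {X : Type*} [Fintype X] [DecidableEq X]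
    (v k t : ℕ) (ht : 2 < t) (htk : t < k) (hkv : k < v)
    (B : Finset (Finset X))
    (hX : Fintype.card X = v)
    (hblocks : ∀ b ∈ B, b.card = k)
    (hdesign : ∀ T : Finset X, T.card = t → (B.filter (fun b => T ⊆ b)).card = 1) :
    ∃ A : Finset X, A.card = t - 1 ∧ k - t + 2 ≤ (B.filter (fun b => A ⊆ b)).card := by
  classical
  obtain ⟨T₀, -, hT₀⟩ := exists_subset_card_eq (s := (univ : Finset X)) (n := t)
    (by rw [card_univ, hX]; omega)
  obtain ⟨b, hb⟩ := card_eq_one.mp (hdesign T₀ hT₀)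
  have hbB : b ∈ B := by
    have := hb ▸ mem_singleton_self b
    exact (mem_filter.mp this).1
  have hbk : b.card = k := hblocks b hbB
  obtain ⟨S, hSb, hS⟩ := exists_subset_card_eq (s := b) (n := t - 3) (by omega)
  have hxS : (b \ S).Nonempty := by
    rw [← card_pos, card_sdiff_of_subset hSb]; omega
  obtain ⟨x, hx⟩ := hxS
  have hxb : x ∈ b := (mem_sdiff.mp hx).1
  have hxnS : x ∉ S := (mem_sdiff.mp hx).2
  have hzb : ((univ : Finset X) \ b).Nonempty := by
    rw [← card_pos, card_sdiff_of_subset (subset_univ b), card_univ, hX]; omega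
  obtain ⟨z, hz⟩ := hzb
  have hznb : z ∉ b := (mem_sdiff.mp hz).2
  set A := insert z (insert x S) with hA
  have hxSb : insert x S ⊆ b := insert_subset hxb hSb
  have hznxS : z ∉ insert x S := fun h => hznb (hxSb h)
  have hcardxS : (insert x S).card = t - 2 := by
    rw [card_insert_of_notMem hxnS, hS]; omega
  have hAcard : A.card = t - 1 := by
    rw [hA, card_insert_of_notMem hznxS, hcardxS]; omega
  refine ⟨A, hAcard, ?_⟩
  set W := b \ insert x S with hW
  have hWcard : W.card = k - t + 2 := by
    rw [hW, card_sdiff_of_subset hxSb, hbk, hcardxS]; omega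
  have hwb : ∀ w ∈ W, w ∈ b := fun w hw => (mem_sdiff.mp hw).1
  have hwnxS : ∀ w ∈ W, w ∉ insert x S := fun w hw => (mem_sdiff.mp hw).2
  have hwA : ∀ w ∈ W, w ∉ A := by
    intro w hw hmem
    rcases mem_insert.mp hmem with h | h
    · exact hznb (h ▸ hwb w hw)
    · exact hwnxS w hw h
  have hwT : ∀ w ∈ W, (insert w A).card = t := by
    intro w hw
    rw [card_insert_of_notMem (hwA w hw), hAcard]; omega
  have hex : ∀ w : X, ∃ c : Finset X, w ∈ W → B.filter (fun b' => insert w A ⊆ b') = {c} := by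
    intro w
    by_cases hw : w ∈ W
    · obtain ⟨c, hc⟩ := card_eq_one.mp (hdesign _ (hwT w hw))
      exact ⟨c, fun _ => hc⟩
    · exact ⟨∅, fun h => absurd h hw⟩
  choose g hg using hex
  have hgmem : ∀ w ∈ W, g w ∈ B ∧ insert w A ⊆ g w := by
    intro w hw
    have h1 : g w ∈ B.filter (fun b' => insert w A ⊆ b') := (hg w hw) ▸ mem_singleton_self _
    exact ⟨(mem_filter.mp h1).1, (mem_filter.mp h1).2⟩
  have hmaps : ∀ w ∈ W, g w ∈ B.filter (fun b' => A ⊆ b') := by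
    intro w hw
    exact mem_filter.mpr ⟨(hgmem w hw).1, (subset_insert _ _).trans (hgmem w hw).2⟩
  have hinj : Set.InjOn g W := by
    intro w hw w' hw' heq
    by_contra hne
    replace hw : w ∈ W := hw
    replace hw' : w' ∈ W := hw'
    set T' := insert w (insert w' (insert x S)) with hT'
    have hT'b : T' ⊆ b := insert_subset (hwb w hw) (insert_subset (hwb w' hw') hxSb)
    have hT'card : T'.card = t := by
      rw [hT', card_insert_of_notMem, card_insert_of_notMem (hwnxS w' hw'), hcardxS]
      · omega
      · intro hmem
        rcases mem_insert.mp hmem with h | h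
        · exact hne h
        · exact hwnxS w hw h
    have hAg : A ⊆ g w := (subset_insert _ _).trans (hgmem w hw).2
    have hT'g : T' ⊆ g w := by
      apply insert_subset ((hgmem w hw).2 (mem_insert_self _ _))
      apply insert_subset
      · exact heq ▸ (hgmem w' hw').2 (mem_insert_self _ _)
      · exact fun a ha => hAg (mem_insert_of_mem ha)
    obtain ⟨c, hc⟩ := card_eq_one.mp (hdesign T' hT'card)
    have hbc : b = c := by
      have : b ∈ B.filter (fun b' => T' ⊆ b') := mem_filter.mpr ⟨hbB, hT'b⟩
      rwa [hc, mem_singleton] at this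
    have hgc : g w = c := by
      have : g w ∈ B.filter (fun b' => T' ⊆ b') := mem_filter.mpr ⟨(hgmem w hw).1, hT'g⟩
      rwa [hc, mem_singleton] at this
    have hzgw : z ∈ g w := hAg (mem_insert_self _ _)
    rw [hgc, ← hbc] at hzgw
    exact hznb hzgw
  calc k - t + 2 = W.card := hWcard.symm
    _ ≤ (B.filter (fun b' => A ⊆ b')).card := card_le_card_of_injOn g hmaps hinj


set_option maxHeartbeats 2000000 in
lemma arith_eq (t k v m P d₃ : ℕ) (ht : 2 < t) (htk : t < k) (hkv : k < v)
    (hm : m = k - t + 1) (hP : P = m * m)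
    (hvtP : v - t + 1 = P + m)
    (h3 : d₃ * (m+2) = (P+m+1) * (P+m+2))
    (h4 : 4 ≤ t → ∃ d : ℕ, d * ((m+2) * (m+3)) = (P+m+1) * ((P+m+2) * (P+m+3)))
    (h6 : 6 ≤ t → ∃ d : ℕ, d * ((m+2) * ((m+3) * ((m+4) * (m+5)))) =
        (P+m+1) * ((P+m+2) * ((P+m+3) * ((P+m+4) * (P+m+5))))) :
    (t = 3 ∧ k = 4 ∧ v = 8) ∨ (t = 3 ∧ k = 6 ∧ v = 22) ∨ (t = 3 ∧ k = 12 ∧ v = 112) ∨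
      (t = 4 ∧ k = 7 ∧ v = 23) ∨ (t = 5 ∧ k = 8 ∧ v = 24) := by
  have hm2 : 2 ≤ m := by clear h3 h4 h6; omega
  have hdvdZ : ((m : ℤ) + 2) ∣ 12 := by
    refine ⟨(d₃ : ℤ) - ((m:ℤ)^3 + 4*m - 5), ?_⟩
    have hc : (d₃ : ℤ) * (m+2) = ((m:ℤ)*m+m+1) * ((m:ℤ)*m+m+2) := by
      exact_mod_cast hP ▸ h3
    linear_combination -hc
  have hdvd : (m + 2) ∣ 12 := by
    have h12 : ((m : ℤ) + 2) = ((m + 2 : ℕ) : ℤ) := by push_cast; ring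
    rw [h12] at hdvdZ
    exact_mod_cast hdvdZ
  have hm12 : m = 2 ∨ m = 4 ∨ m = 10 := by
    have hle0 : m + 2 ≤ 12 := Nat.le_of_dvd (by norm_num) hdvd
    have hle : m ≤ 10 := by clear h3 h4 h6; omega
    clear h3 h4 h6 hP hvtP hm hdvdZ hle0
    interval_cases m <;> omega
  clear hdvdZ hdvd
  by_cases ht4 : 4 ≤ t
  · obtain ⟨d₄, hd₄⟩ := h4 ht4
    clear h4
    by_cases ht6 : 6 ≤ t
    · exfalso
      obtain ⟨d₆, hd₆⟩ := h6 ht6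
      clear h6
      rcases hm12 with rfl | rfl | rfl
      · have hP4 : P = 4 := by omega
        subst hP4; omega
      · have hP4 : P = 16 := by omega
        subst hP4; omega
      · have hP4 : P = 100 := by omega
        subst hP4; omega
    · clear h6
      rcases hm12 with rfl | rfl | rfl
      · exfalso
        have hP4 : P = 4 := by omega
        subst hP4; omega
      · have hP4 : P = 16 := by omega
        subst hP4; omega
      · exfalso
        have hP4 : P = 100 := by omega
        subst hP4; omega
  · clear h4 h6
    rcases hm12 with rfl | rfl | rfl
    · have hP4 : P = 4 := by omega
      subst hP4; omega
    · have hP4 : P = 16 := by omega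
      subst hP4; omega
    · have hP4 : P = 100 := by omega
      subst hP4; omega

/-- (Cameron) If `D` is a non-trivial Steiner `t`-design with `t > 2`, then
`v - t + 1 ≥ (k-t+2)(k-t+1)`, and in case of equality `(t,k,v)` is one of
`(3,4,8), (3,6,22), (3,12,112), (4,7,23), (5,8,24)`. -/
theorem stmt_6 {X : Type*} [Fintype X] [DecidableEq X]
    (v k t : ℕ) (ht : 2 < t) (htk : t < k) (hkv : k < v)
    (B : Finset (Finset X))
    (hX : Fintype.card X = v)
    (hblocks : ∀ b ∈ B, b.card = k)
    (hdesign : ∀ T : Finset X, T.card = t → (B.filter (fun b => T ⊆ b)).card = 1) :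
    v - t + 1 ≥ (k - t + 2) * (k - t + 1) ∧
      (v - t + 1 = (k - t + 2) * (k - t + 1) →
        ((t, k, v) = (3, 4, 8) ∨ (t, k, v) = (3, 6, 22) ∨ (t, k, v) = (3, 12, 112) ∨
          (t, k, v) = (4, 7, 23) ∨ (t, k, v) = (5, 8, 24))) := by
  classical
  have countA' := fun (i : ℕ) (hi : i ≤ t) => countA v k t B hX hblocks hdesign i hi
  obtain ⟨A, hAcard, hAle⟩ := lamB v k t ht htk hkv B hX hblocks hdesign
  have hcnt := countA' (t-1) (by omega) A hAcard
  have e1 : t - (t-1) = 1 := by omega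
  have e2 : k - (t-1) = k - t + 1 := by omega
  have e3 : v - (t-1) = v - t + 1 := by omega
  rw [e1, e2, e3, Nat.choose_one_right, Nat.choose_one_right] at hcnt
  constructor
  · calc (k - t + 2) * (k - t + 1) ≤ (Finset.filter (fun b => A ⊆ b) B).card * (k - t + 1) :=
        Nat.mul_le_mul_right _ hAle
      _ = v - t + 1 := hcnt
  · intro heq
    obtain ⟨m, hm⟩ : ∃ m, m = k - t + 1 := ⟨_, rfl⟩
    obtain ⟨P, hP⟩ : ∃ P, P = m * m := ⟨_, rfl⟩
    have hm2 : 2 ≤ m := by omega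
    have hvtP : v - t + 1 = P + m := by
      rw [heq]
      have h1 : k - t + 2 = m + 1 := by omega
      have h2 : k - t + 1 = m := by omega
      rw [h1, h2, hP]; ring
    -- level 3
    obtain ⟨A₃, hA₃sub, hA₃⟩ := Finset.exists_subset_card_eq
      (s := (Finset.univ : Finset X)) (n := t - 3) (by rw [Finset.card_univ, hX]; omega)
    have h3 := countA' (t-3) (by omega) A₃ hA₃
    have f1 : t - (t-3) = 3 := by omega
    have f2 : k - (t-3) = m + 2 := by omega
    have f3 : v - (t-3) = P + m + 2 := by omega
    rw [f1, f2, f3] at h3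
    have h3' : (Finset.filter (fun b => A₃ ⊆ b) B).card * (m * ((m+1) * ((m+2) * 1))) =
        (P+m) * ((P+m+1) * ((P+m+2) * 1)) := by
      have l1 : (m+2).descFactorial 3 = m * ((m+1) * ((m+2) * 1)) := rfl
      have l2 : (P+m+2).descFactorial 3 = (P+m) * ((P+m+1) * ((P+m+2) * 1)) := rfl
      rw [← l1, ← l2, Nat.descFactorial_eq_factorial_mul_choose,
        Nat.descFactorial_eq_factorial_mul_choose, ← h3]
      ring
    have hcancel3 : (Finset.filter (fun b => A₃ ⊆ b) B).card * (m+2) = (P+m+1) * (P+m+2) := by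
      have hpos : 0 < (m+1) * m := by positivity
      apply Nat.eq_of_mul_eq_mul_left hpos
      calc (m+1) * m * ((Finset.filter (fun b => A₃ ⊆ b) B).card * (m+2))
          = (Finset.filter (fun b => A₃ ⊆ b) B).card * (m * ((m+1) * ((m+2) * 1))) := by ring
        _ = (P+m) * ((P+m+1) * ((P+m+2) * 1)) := h3'
        _ = (m+1) * m * ((P+m+1) * (P+m+2)) := by rw [hP]; ring
    -- level 4
    have h4c : 4 ≤ t → ∃ d : ℕ, d * ((m+2) * (m+3)) = (P+m+1) * ((P+m+2) * (P+m+3)) := by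
      intro ht4
      obtain ⟨A₄, hA₄sub, hA₄⟩ := Finset.exists_subset_card_eq
        (s := (Finset.univ : Finset X)) (n := t - 4) (by rw [Finset.card_univ, hX]; omega)
      have h4 := countA' (t-4) (by omega) A₄ hA₄
      have g1 : t - (t-4) = 4 := by omega
      have g2 : k - (t-4) = m + 3 := by omega
      have g3 : v - (t-4) = P + m + 3 := by omega
      rw [g1, g2, g3] at h4
      have h4' : (Finset.filter (fun b => A₄ ⊆ b) B).card * (m * ((m+1) * ((m+2) * ((m+3) * 1)))) =
          (P+m) * ((P+m+1) * ((P+m+2) * ((P+m+3) * 1))) := by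
        have l1 : (m+3).descFactorial 4 = m * ((m+1) * ((m+2) * ((m+3) * 1))) := rfl
        have l2 : (P+m+3).descFactorial 4 = (P+m) * ((P+m+1) * ((P+m+2) * ((P+m+3) * 1))) := rfl
        rw [← l1, ← l2, Nat.descFactorial_eq_factorial_mul_choose,
          Nat.descFactorial_eq_factorial_mul_choose, ← h4]
        ring
      refine ⟨(Finset.filter (fun b => A₄ ⊆ b) B).card, ?_⟩
      have hpos : 0 < (m+1) * m := by positivity
      apply Nat.eq_of_mul_eq_mul_left hpos
      calc (m+1) * m * ((Finset.filter (fun b => A₄ ⊆ b) B).card * ((m+2) * (m+3)))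
          = (Finset.filter (fun b => A₄ ⊆ b) B).card * (m * ((m+1) * ((m+2) * ((m+3) * 1)))) := by
            ring
        _ = (P+m) * ((P+m+1) * ((P+m+2) * ((P+m+3) * 1))) := h4'
        _ = (m+1) * m * ((P+m+1) * ((P+m+2) * (P+m+3))) := by rw [hP]; ring
    -- level 6
    have h6c : 6 ≤ t → ∃ d : ℕ, d * ((m+2) * ((m+3) * ((m+4) * (m+5)))) =
        (P+m+1) * ((P+m+2) * ((P+m+3) * ((P+m+4) * (P+m+5)))) := by
      clear h4c
      intro ht6
      obtain ⟨A₆, hA₆sub, hA₆⟩ := Finset.exists_subset_card_eq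
        (s := (Finset.univ : Finset X)) (n := t - 6) (by rw [Finset.card_univ, hX]; omega)
      have h6 := countA' (t-6) (by omega) A₆ hA₆
      have g1 : t - (t-6) = 6 := by omega
      have g2 : k - (t-6) = m + 5 := by omega
      have g3 : v - (t-6) = P + m + 5 := by omega
      rw [g1, g2, g3] at h6
      have h6' : (Finset.filter (fun b => A₆ ⊆ b) B).card *
          (m * ((m+1) * ((m+2) * ((m+3) * ((m+4) * ((m+5) * 1)))))) =
          (P+m) * ((P+m+1) * ((P+m+2) * ((P+m+3) * ((P+m+4) * ((P+m+5) * 1))))) := by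
        have l1 : (m+5).descFactorial 6 =
            m * ((m+1) * ((m+2) * ((m+3) * ((m+4) * ((m+5) * 1))))) := rfl
        have l2 : (P+m+5).descFactorial 6 =
            (P+m) * ((P+m+1) * ((P+m+2) * ((P+m+3) * ((P+m+4) * ((P+m+5) * 1))))) := rfl
        rw [← l1, ← l2, Nat.descFactorial_eq_factorial_mul_choose,
          Nat.descFactorial_eq_factorial_mul_choose, ← h6]
        ring
      refine ⟨(Finset.filter (fun b => A₆ ⊆ b) B).card, ?_⟩
      have hpos : 0 < (m+1) * m := by positivity
      apply Nat.eq_of_mul_eq_mul_left hpos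
      calc (m+1) * m * ((Finset.filter (fun b => A₆ ⊆ b) B).card *
            ((m+2) * ((m+3) * ((m+4) * (m+5)))))
          = (Finset.filter (fun b => A₆ ⊆ b) B).card *
            (m * ((m+1) * ((m+2) * ((m+3) * ((m+4) * ((m+5) * 1)))))) := by ring
        _ = (P+m) * ((P+m+1) * ((P+m+2) * ((P+m+3) * ((P+m+4) * ((P+m+5) * 1))))) := h6'
        _ = (m+1) * m * ((P+m+1) * ((P+m+2) * ((P+m+3) * ((P+m+4) * (P+m+5))))) := by
            rw [hP]; ring
    have hfinal := arith_eq t k v m P _ ht htk hkv hm hP hvtP hcancel3 h4c h6c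
    simp only [Prod.mk.injEq]
    exact hfinal
end

section
/- Let D be a non-trivial Steiner t-design with t = 4 + i, where i ∈ {0,1}. Then k ≤ ⌊√(v - (11/4 + i)) + 5/2 + i⌋, where ⌊x⌋ denotes the greatest integer at most x. -/
open Finset

private lemma steiner_card_bound {X : Type*} [DecidableEq X] :
    ∀ t : ℕ, 2 ≤ t → ∀ (S : Finset X) (B : Finset (Finset X)) (k : ℕ),
      t < k → k < S.card →
      (∀ b ∈ B, b ⊆ S ∧ b.card = k) →
      (∀ T ⊆ S, T.card = t → (B.filter (fun b => T ⊆ b)).card = 1) →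
      (k - t + 2) * (k - t + 1) + t - 1 ≤ S.card := by
  intro t ht
  induction t, ht using Nat.le_induction with
  | base =>
    intro S B k htk hkS hb hd
    -- obtain a block b₀
    obtain ⟨T, hTS, hT2⟩ := S.exists_subset_card_eq (show 2 ≤ S.card by omega)
    have hT := hd T hTS hT2
    obtain ⟨b₀, hb₀⟩ := Finset.card_eq_one.mp hT
    have hb₀B : b₀ ∈ B ∧ T ⊆ b₀ := by
      have : b₀ ∈ B.filter (fun b => T ⊆ b) := by rw [hb₀]; simp
      simpa using this
    -- obtain a point p outside b₀
    have hb₀S : b₀ ⊆ S := (hb _ hb₀B.1).1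
    have hb₀k : b₀.card = k := (hb _ hb₀B.1).2
    have hsd : 0 < (S \ b₀).card := by
      rw [Finset.card_sdiff_of_subset hb₀S]; omega
    obtain ⟨p, hp⟩ := Finset.card_pos.mp hsd
    have hpS : p ∈ S := (Finset.mem_sdiff.mp hp).1
    have hpb₀ : p ∉ b₀ := (Finset.mem_sdiff.mp hp).2
    set R := B.filter (fun b => p ∈ b) with hR
    -- every point other than p lies in exactly one block through p
    have hpair : ∀ y ∈ S, y ≠ p → (B.filter (fun b => ({p, y} : Finset X) ⊆ b)).card = 1 := by
      intro y hy hyp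
      apply hd
      · intro z hz
        simp only [Finset.mem_insert, Finset.mem_singleton] at hz
        rcases hz with rfl | rfl
        · exact hpS
        · exact hy
      · rw [Finset.card_insert_of_notMem (by simpa using hyp.symm), Finset.card_singleton]
    -- decomposition of S.erase p
    have hcover : S.erase p = R.biUnion (fun c => c.erase p) := by
      ext y
      simp only [Finset.mem_erase, Finset.mem_biUnion, hR, Finset.mem_filter]
      constructor
      · rintro ⟨hyp, hyS⟩
        have h1 := hpair y hyS hyp
        have hne : (B.filter (fun b => ({p, y} : Finset X) ⊆ b)).Nonempty := by
          rw [← Finset.card_pos, h1]; norm_num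
        obtain ⟨c, hc⟩ := hne
        simp only [Finset.mem_filter, Finset.insert_subset_iff, Finset.singleton_subset_iff] at hc
        exact ⟨c, ⟨hc.1, hc.2.1⟩, hyp, hc.2.2⟩
      · rintro ⟨c, ⟨hcB, hpc⟩, hyp, hyc⟩
        exact ⟨hyp, (hb _ hcB).1 hyc⟩
    have hdisj : ∀ c ∈ R, ∀ c' ∈ R, c ≠ c' → Disjoint (c.erase p) (c'.erase p) := by
      intro c hc c' hc' hne
      rw [Finset.disjoint_left]
      intro y hyc hyc'
      simp only [hR, Finset.mem_filter] at hc hc'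
      simp only [Finset.mem_erase] at hyc hyc'
      have hyS : y ∈ S := (hb _ hc.1).1 hyc.2
      have h1 := hpair y hyS hyc.1
      have hsub : ({c, c'} : Finset (Finset X)) ⊆ B.filter (fun b => ({p, y} : Finset X) ⊆ b) := by
        intro d hd'
        simp only [Finset.mem_insert, Finset.mem_singleton] at hd'
        rcases hd' with rfl | rfl <;>
          simp only [Finset.mem_filter, Finset.insert_subset_iff, Finset.singleton_subset_iff] <;>
          tauto
      have h2 : ({c, c'} : Finset (Finset X)).card = 2 := by
        rw [Finset.card_insert_of_notMem (by simpa using hne), Finset.card_singleton]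
      have := Finset.card_le_card hsub
      omega
    have hcount : (S.erase p).card = R.card * (k - 1) := by
      rw [hcover, Finset.card_biUnion hdisj]
      rw [Finset.sum_congr rfl (fun c hc => ?_), Finset.sum_const, smul_eq_mul]
      simp only [hR, Finset.mem_filter] at hc
      rw [Finset.card_erase_of_mem hc.2, (hb _ hc.1).2]
    -- R has at least k blocks, via injection from b₀
    have hRk : k ≤ R.card := by
      have hinj : ∀ y ∈ b₀,
          (if h : (B.filter (fun b => ({p, y} : Finset X) ⊆ b)).Nonempty then h.choose else ∅) ∈ R ∧
          ({p, y} : Finset X) ⊆ (if h : (B.filter (fun b => ({p, y} : Finset X) ⊆ b)).Nonempty then h.choose else ∅) := by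
        intro y hy
        have hyS : y ∈ S := hb₀S hy
        have hyp : y ≠ p := fun h => hpb₀ (h ▸ hy)
        have h1 := hpair y hyS hyp
        have hne : (B.filter (fun b => ({p, y} : Finset X) ⊆ b)).Nonempty := by
          rw [← Finset.card_pos, h1]; norm_num
        rw [dif_pos hne]
        have := hne.choose_spec
        simp only [Finset.mem_filter] at this
        refine ⟨?_, this.2⟩
        simp only [hR, Finset.mem_filter]
        exact ⟨this.1, this.2 (by simp)⟩
      have := Finset.card_le_card_of_injOn
        (fun y => if h : (B.filter (fun b => ({p, y} : Finset X) ⊆ b)).Nonempty then h.choose else ∅)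
        (fun y hy => (hinj y hy).1) ?_
      · omega
      · intro y hy y' hy' heq
        by_contra hne
        set c := (if h : (B.filter (fun b => ({p, y} : Finset X) ⊆ b)).Nonempty then h.choose else ∅)
        have h1 := (hinj y hy).2
        have h2 := (hinj y' hy').2
        have heq2 : (if h : (B.filter (fun b => ({p, y} : Finset X) ⊆ b)).Nonempty then h.choose else ∅)
            = (if h : (B.filter (fun b => ({p, y'} : Finset X) ⊆ b)).Nonempty then h.choose else ∅) := heq
        rw [← heq2] at h2
        have hcB : c ∈ B := by
          have := (hinj y hy).1
          simp only [hR, Finset.mem_filter] at this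
          exact this.1
        -- c contains y and y', as does b₀; contradiction
        have hyy'S : ({y, y'} : Finset X) ⊆ S := by
          intro z hz
          simp only [Finset.mem_insert, Finset.mem_singleton] at hz
          rcases hz with rfl | rfl
          · exact hb₀S hy
          · exact hb₀S hy'
        have hcard2 : ({y, y'} : Finset X).card = 2 := by
          rw [Finset.card_insert_of_notMem (by simpa using hne), Finset.card_singleton]
        have hd2 := hd _ hyy'S hcard2
        have hsub : ({b₀, c} : Finset (Finset X)) ⊆ B.filter (fun b => ({y, y'} : Finset X) ⊆ b) := by
          intro d hd'
          simp only [Finset.mem_insert, Finset.mem_singleton] at hd'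
          rcases hd' with rfl | rfl
          · simp only [Finset.mem_filter, Finset.insert_subset_iff, Finset.singleton_subset_iff]
            exact ⟨hb₀B.1, hy, hy'⟩
          · simp only [Finset.mem_filter, Finset.insert_subset_iff, Finset.singleton_subset_iff]
            refine ⟨hcB, h1 (by simp), h2 (by simp)⟩
        have hb₀c : b₀ ≠ c := by
          intro h
          exact hpb₀ (h ▸ h1 (by simp))
        have hc2 : ({b₀, c} : Finset (Finset X)).card = 2 := by
          rw [Finset.card_insert_of_notMem (by simpa using hb₀c), Finset.card_singleton]
        have := Finset.card_le_card hsub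
        omega
    have hSe : (S.erase p).card = S.card - 1 := Finset.card_erase_of_mem hpS
    have hS1 : 1 ≤ S.card := by omega
    have : k * (k - 1) ≤ S.card - 1 := by
      rw [← hSe, hcount]
      exact Nat.mul_le_mul_right _ hRk
    have hk2 : k - 2 + 2 = k := by omega
    have hk1 : k - 2 + 1 = k - 1 := by omega
    rw [hk2, hk1]
    omega
  | succ t ht ih =>
    intro S B k htk hkS hb hd
    have hS0 : 0 < S.card := by omega
    obtain ⟨x, hxS⟩ := Finset.card_pos.mp hS0
    set S' := S.erase x with hS'
    set B' := (B.filter (fun b => x ∈ b)).image (fun b => b.erase x) with hB'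
    have hS'card : S'.card = S.card - 1 := Finset.card_erase_of_mem hxS
    have hih := ih S' B' (k - 1) (by omega) (by omega) ?_ ?_
    · have e1 : k - 1 - t + 2 = k - (t + 1) + 2 := by omega
      have e2 : k - 1 - t + 1 = k - (t + 1) + 1 := by omega
      rw [e1, e2, hS'card] at hih
      generalize (k - (t + 1) + 2) * (k - (t + 1) + 1) = M at *
      omega
    · rintro b' hb'
      simp only [hB', Finset.mem_image, Finset.mem_filter] at hb'
      obtain ⟨b, ⟨hbB, hxb⟩, rfl⟩ := hb'
      constructor
      · exact Finset.erase_subset_erase x (hb _ hbB).1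
      · rw [Finset.card_erase_of_mem hxb, (hb _ hbB).2]
    · intro T hTS' hTt
      have hxT : x ∉ T := fun h => by simp [hS'] at hTS'; exact (Finset.mem_erase.mp (hTS' h)).1 rfl
      have hT' : (insert x T) ⊆ S := by
        rw [Finset.insert_subset_iff]
        exact ⟨hxS, hTS'.trans (Finset.erase_subset x S)⟩
      have hT'card : (insert x T).card = t + 1 := by
        rw [Finset.card_insert_of_notMem hxT, hTt]
      have hd1 := hd _ hT' hT'card
      have heq : B'.filter (fun b => T ⊆ b)
          = (B.filter (fun b => insert x T ⊆ b)).image (fun b => b.erase x) := by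
        ext c
        simp only [hB', Finset.mem_filter, Finset.mem_image]
        constructor
        · rintro ⟨⟨b, ⟨hbB, hxb⟩, rfl⟩, hTc⟩
          refine ⟨b, ⟨hbB, ?_⟩, rfl⟩
          rw [Finset.insert_subset_iff]
          exact ⟨hxb, hTc.trans (Finset.erase_subset x b)⟩
        · rintro ⟨b, ⟨hbB, hTb⟩, rfl⟩
          rw [Finset.insert_subset_iff] at hTb
          refine ⟨⟨b, ⟨hbB, hTb.1⟩, rfl⟩, ?_⟩
          intro z hz
          exact Finset.mem_erase.mpr ⟨fun h => hxT (h ▸ hz), hTb.2 hz⟩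
      rw [heq, Finset.card_image_of_injOn, hd1]
      intro b hbm b' hbm' he
      simp only [Finset.mem_coe, Finset.mem_filter, Finset.insert_subset_iff] at hbm hbm'
      have h1 : insert x (b.erase x) = b := Finset.insert_erase hbm.2.1
      have h2 : insert x (b'.erase x) = b' := Finset.insert_erase hbm'.2.1
      rw [← h1, ← h2]
      exact congrArg (insert x) he

/-- Let `D` be a non-trivial Steiner `t`-design with `t = 4 + i`, `i ∈ {0,1}`.
Then `k ≤ ⌊√(v - (11/4 + i)) + 5/2 + i⌋`. -/
theorem stmt_7 {X : Type*} [Fintype X] [DecidableEq X]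
    (v k t i : ℕ) (hi : i = 0 ∨ i = 1) (hti : t = 4 + i) (htk : t < k) (hkv : k < v)
    (B : Finset (Finset X))
    (hX : Fintype.card X = v)
    (hblocks : ∀ b ∈ B, b.card = k)
    (hdesign : ∀ T : Finset X, T.card = t → (B.filter (fun b => T ⊆ b)).card = 1) :
    (k : ℤ) ≤ ⌊Real.sqrt ((v : ℝ) - (11 / 4 + (i : ℝ))) + 5 / 2 + (i : ℝ)⌋ := by
  have huniv : (Finset.univ : Finset X).card = v := by rw [Finset.card_univ, hX]
  have hbound := steiner_card_bound t (by omega) Finset.univ B k htk (by omega)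
    (fun b hb => ⟨Finset.subset_univ b, hblocks b hb⟩)
    (fun T _ hT => hdesign T hT)
  rw [huniv] at hbound
  -- hbound : (k - t + 2) * (k - t + 1) + t - 1 ≤ v
  rw [Int.le_floor]
  rcases hi with rfl | rfl <;> subst hti
  · obtain ⟨m, rfl⟩ : ∃ m, k = m + 5 := ⟨k - 5, by omega⟩
    rw [show m + 5 - (4 + 0) + 2 = m + 3 from by omega,
        show m + 5 - (4 + 0) + 1 = m + 2 from by omega] at hbound
    have hb2 : (m + 3) * (m + 2) + 3 ≤ v := by omega
    have hv : ((m : ℝ) + 3) * ((m : ℝ) + 2) + 3 ≤ (v : ℝ) := by exact_mod_cast hb2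
    have key : ((m : ℝ) + 5) - 5 / 2 ≤ Real.sqrt ((v : ℝ) - (11 / 4 + ((0 : ℕ) : ℝ))) := by
      rw [Real.le_sqrt' (by have : (0:ℝ) ≤ (m:ℝ) := Nat.cast_nonneg m; linarith)]
      push_cast
      nlinarith [hv]
    push_cast at key ⊢
    linarith
  · obtain ⟨m, rfl⟩ : ∃ m, k = m + 6 := ⟨k - 6, by omega⟩
    rw [show m + 6 - (4 + 1) + 2 = m + 3 from by omega,
        show m + 6 - (4 + 1) + 1 = m + 2 from by omega] at hbound
    have hb2 : (m + 3) * (m + 2) + 4 ≤ v := by omega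
    have hv : ((m : ℝ) + 3) * ((m : ℝ) + 2) + 4 ≤ (v : ℝ) := by exact_mod_cast hb2
    have key : ((m : ℝ) + 6) - 7 / 2 ≤ Real.sqrt ((v : ℝ) - (11 / 4 + ((1 : ℕ) : ℝ))) := by
      rw [Real.le_sqrt' (by have : (0:ℝ) ≤ (m:ℝ) := Nat.cast_nonneg m; linarith)]
      push_cast
      nlinarith [hv]
    push_cast at key ⊢
    linarith
end

section
/- Let d ≥ 3 and let AGL(d,2) be the group of affine transformations x ↦ g(x) + u of the vector space V = (F_2)^d, where g ∈ GL(d,2) and u ∈ V, acting on the v = 2^d points of V. There is no non-trivial Steiner 4-design D on the point set V admitting AGL(d,2) as a block-transitive group of automorphisms. -/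
section aux

variable {d : ℕ}

private lemma zmod2_add_self (a : ZMod 2) : a + a = 0 := by revert a; decide

private lemma zmod2_cases (a : ZMod 2) : a = 0 ∨ a = 1 := by revert a; decide

private lemma vec_add_self (v : Fin d → ZMod 2) : v + v = 0 := by
  funext j; exact zmod2_add_self (v j)

/-- For `p` with `p i = 1`, the map `x ↦ x + x i • (p + eᵢ)` is a linear involution that
fixes `e j` for `j ≠ i` and swaps `p` with `eᵢ`. -/
private lemma exists_fix (i : Fin d) (p : Fin d → ZMod 2) (hp : p i = 1) :
    ∃ g : (Fin d → ZMod 2) ≃ₗ[ZMod 2] (Fin d → ZMod 2),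
      ∀ x, g x = x + x i • (p + Pi.single i 1) := by
  set w : Fin d → ZMod 2 := p + Pi.single i 1 with hwdef
  have hw : w i = 0 := by
    simp only [hwdef, Pi.add_apply, Pi.single_eq_same, hp]
    decide
  let f : (Fin d → ZMod 2) →ₗ[ZMod 2] (Fin d → ZMod 2) :=
    LinearMap.id + (LinearMap.proj i).smulRight w
  have hfx : ∀ x, f x = x + x i • w := fun x => rfl
  have hinv : Function.Involutive f := by
    intro x
    have h1 : (x + x i • w) i = x i := by
      simp [hw]
    rw [hfx, hfx, h1, add_assoc, ← add_smul, zmod2_add_self, zero_smul, add_zero]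
  exact ⟨LinearEquiv.ofInvolutive f hinv, hfx⟩

end aux

/-- Let `d ≥ 3` and let `AGL(d,2)` act as the affine maps `x ↦ g x + u`
(`g ∈ GL(d,2)`, `u ∈ V`) on the `v = 2^d` points of `V = (F₂)^d`. There is no non-trivial
Steiner 4-design on `V` admitting `AGL(d,2)` as a block-transitive group of automorphisms. -/
theorem stmt_13 (d : ℕ) (hd : 3 ≤ d)
    (k : ℕ) (htk : 4 < k) (hkv : k < 2 ^ d)
    (B : Finset (Finset (Fin d → ZMod 2)))
    (hblocks : ∀ b ∈ B, b.card = k)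
    (hdesign : ∀ T : Finset (Fin d → ZMod 2), T.card = 4 →
      (B.filter (fun b => T ⊆ b)).card = 1)
    (hAut : ∀ (g : (Fin d → ZMod 2) ≃ₗ[ZMod 2] (Fin d → ZMod 2)) (u : Fin d → ZMod 2),
      ∀ b ∈ B, b.image (fun x => g x + u) ∈ B)
    (hBT : ∀ b₁ ∈ B, ∀ b₂ ∈ B,
      ∃ (g : (Fin d → ZMod 2) ≃ₗ[ZMod 2] (Fin d → ZMod 2)) (u : Fin d → ZMod 2),
        b₁.image (fun x => g x + u) = b₂) :
    False := by
  classical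
  -- the two first standard basis vectors
  set i0 : Fin d := ⟨0, by omega⟩ with hi0def
  set i1 : Fin d := ⟨1, by omega⟩ with hi1def
  have hi01 : i0 ≠ i1 := by simp [hi0def, hi1def, Fin.ext_iff]
  set e0 : Fin d → ZMod 2 := Pi.single i0 1 with he0def
  set e1 : Fin d → ZMod 2 := Pi.single i1 1 with he1def
  -- the affine plane T
  set T : Finset (Fin d → ZMod 2) := {0, e0, e1, e0 + e1} with hTdef
  have he00 : e0 i0 = 1 := by simp [he0def]
  have he01 : e0 i1 = 0 := by simp [he0def, Pi.single_apply, hi01.symm]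
  have he10 : e1 i0 = 0 := by simp [he1def, Pi.single_apply, hi01]
  have he11 : e1 i1 = 1 := by simp [he1def]
  have hmemT : ∀ x : Fin d → ZMod 2, x ∈ T ↔ (x = 0 ∨ x = e0 ∨ x = e1 ∨ x = e0 + e1) := by
    intro x; simp [hTdef]
  have hne0 : e0 ≠ 0 := fun h => by simpa [he00] using congrFun h i0
  have hne1 : e1 ≠ 0 := fun h => by simpa [he11] using congrFun h i1
  have hne01 : e0 ≠ e1 := fun h => by
    have := congrFun h i0; rw [he00, he10] at this; exact one_ne_zero this
  have hnes : e0 + e1 ≠ 0 := fun h => by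
    have := congrFun h i0; simp [he00, he10] at this
  have hnes0 : e0 + e1 ≠ e0 := fun h => by
    have := congrFun h i1; simp [he01, he11] at this
  have hnes1 : e0 + e1 ≠ e1 := fun h => by
    have := congrFun h i0; simp [he00, he10] at this
  have hTcard : T.card = 4 := by
    rw [hTdef]
    rw [Finset.card_insert_of_notMem (by simp [hne0.symm, hne1.symm, hnes.symm]),
        Finset.card_insert_of_notMem (by simp [hne01, hnes0.symm]),
        Finset.card_insert_of_notMem (by simp [hnes1.symm]), Finset.card_singleton]
  -- the unique block through T
  obtain ⟨b, hb⟩ := Finset.card_eq_one.mp (hdesign T hTcard)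
  have hbmem : b ∈ B.filter (fun b => T ⊆ b) := hb ▸ Finset.mem_singleton_self b
  have hbB : b ∈ B := (Finset.mem_filter.mp hbmem).1
  have hTb : T ⊆ b := (Finset.mem_filter.mp hbmem).2
  have huniq : ∀ b' ∈ B, T ⊆ b' → b' = b := by
    intro b' hb' hTb'
    have : b' ∈ B.filter (fun b => T ⊆ b) := Finset.mem_filter.mpr ⟨hb', hTb'⟩
    rw [hb] at this; exact Finset.mem_singleton.mp this
  -- any linear map fixing e0 and e1 stabilizes b
  have hstab : ∀ g : (Fin d → ZMod 2) ≃ₗ[ZMod 2] (Fin d → ZMod 2), g e0 = e0 → g e1 = e1 → ∀ x ∈ b, g x ∈ b := by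
    intro g hg0 hg1 x hx
    have hgT : ∀ t ∈ T, g t = t := by
      intro t ht
      rcases (hmemT t).mp ht with h | h | h | h <;> subst h
      · exact map_zero g
      · exact hg0
      · exact hg1
      · rw [map_add, hg0, hg1]
    have himg : b.image (fun x => g x + 0) ∈ B := hAut g 0 b hbB
    have hTimg : T ⊆ b.image (fun x => g x + 0) := by
      intro t ht
      exact Finset.mem_image.mpr ⟨t, hTb ht, by rw [hgT t ht, add_zero]⟩
    have heq : b.image (fun x => g x + 0) = b := huniq _ himg hTimg
    rw [← heq]
    exact Finset.mem_image.mpr ⟨x, hx, by rw [add_zero]⟩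
  -- a point of b outside T
  have hbcard : b.card = k := hblocks b hbB
  have hnsub : ¬ b ⊆ T := by
    intro h
    have := Finset.card_le_card h
    omega
  obtain ⟨p, hpb, hpT⟩ := Finset.not_subset.mp hnsub
  -- extract a high coordinate equal to 1 for any point outside T
  have hcoord : ∀ q : Fin d → ZMod 2, q ∉ T → ∃ i : Fin d, i ≠ i0 ∧ i ≠ i1 ∧ q i = 1 := by
    intro q hq
    by_contra hcon
    push_neg at hcon
    have hz : ∀ i : Fin d, i ≠ i0 → i ≠ i1 → q i = 0 := by
      intro i h1 h2
      rcases zmod2_cases (q i) with h | h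
      · exact h
      · exact absurd h (hcon i h1 h2)
    apply hq
    rw [hmemT]
    have hq' : q = q i0 • e0 + q i1 • e1 := by
      funext j
      by_cases hj0 : j = i0
      · subst hj0; simp [he00, he10]
      · by_cases hj1 : j = i1
        · subst hj1; simp [he01, he11]
        · have h1 : e0 j = 0 := by simp [he0def, Pi.single_apply, hj0]
          have h2 : e1 j = 0 := by simp [he1def, Pi.single_apply, hj1]
          simp [h1, h2, hz j hj0 hj1]
    rcases zmod2_cases (q i0) with h0 | h0 <;> rcases zmod2_cases (q i1) with h1 | h1 <;>
      rw [h0, h1] at hq' <;> simp only [zero_smul, one_smul, zero_add, add_zero] at hq'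
    · exact Or.inl hq'
    · exact Or.inr (Or.inr (Or.inl hq'))
    · exact Or.inr (Or.inl hq')
    · exact Or.inr (Or.inr (Or.inr hq'))
  obtain ⟨i, hii0, hii1, hpi⟩ := hcoord p hpT
  obtain ⟨gp, hgp⟩ := exists_fix i p hpi
  have hgp_e0 : gp e0 = e0 := by
    rw [hgp]
    have : e0 i = 0 := by simp [he0def, Pi.single_apply, hii0.symm]
    rw [this, zero_smul, add_zero]
  have hgp_e1 : gp e1 = e1 := by
    rw [hgp]
    have : e1 i = 0 := by simp [he1def, Pi.single_apply, hii1.symm]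
    rw [this, zero_smul, add_zero]
  have hgp_p : gp p = Pi.single i 1 := by
    rw [hgp, hpi, one_smul, ← add_assoc, vec_add_self, zero_add]
  -- show every point is in b
  have hall : ∀ q : Fin d → ZMod 2, q ∈ b := by
    intro q
    by_cases hqT : q ∈ T
    · exact hTb hqT
    obtain ⟨j, hji0, hji1, hqj⟩ := hcoord q hqT
    obtain ⟨gq, hgq⟩ := exists_fix j q hqj
    -- the coordinate swap i ↔ j
    set σ : (Fin d → ZMod 2) ≃ₗ[ZMod 2] (Fin d → ZMod 2) := LinearEquiv.funCongrLeft (ZMod 2) (ZMod 2) (Equiv.swap i j)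
      with hσdef
    have hσapp : ∀ (x : Fin d → ZMod 2) (m : Fin d), σ x m = x (Equiv.swap i j m) := by
      intro x m
      rw [hσdef, LinearEquiv.funCongrLeft_apply, LinearMap.funLeft_apply]
    have hσsingle : ∀ a : Fin d, σ (Pi.single a 1) = Pi.single (Equiv.swap i j a) 1 := by
      intro a
      funext m
      rw [hσapp]
      simp only [Pi.single_apply]
      by_cases h : m = Equiv.swap i j a
      · rw [if_pos h, if_pos (by rw [h, Equiv.swap_apply_self])]
      · rw [if_neg (fun hc => h (Equiv.swap_apply_eq_iff.mp hc)), if_neg h]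
    have hσe0 : σ e0 = e0 := by
      rw [he0def, hσsingle, Equiv.swap_apply_of_ne_of_ne hii0.symm hji0.symm]
    have hσe1 : σ e1 = e1 := by
      rw [he1def, hσsingle, Equiv.swap_apply_of_ne_of_ne hii1.symm hji1.symm]
    have hσi : σ (Pi.single i 1) = Pi.single j 1 := by
      rw [hσsingle, Equiv.swap_apply_left]
    -- the composite map
    set g : (Fin d → ZMod 2) ≃ₗ[ZMod 2] (Fin d → ZMod 2) := gp.trans (σ.trans gq) with hgdef
    have hg0 : g e0 = e0 := by
      rw [hgdef]
      simp only [LinearEquiv.trans_apply]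
      rw [hgp_e0, hσe0, hgq]
      have : e0 j = 0 := by simp [he0def, Pi.single_apply, hji0.symm]
      rw [this, zero_smul, add_zero]
    have hg1 : g e1 = e1 := by
      rw [hgdef]
      simp only [LinearEquiv.trans_apply]
      rw [hgp_e1, hσe1, hgq]
      have : e1 j = 0 := by simp [he1def, Pi.single_apply, hji1.symm]
      rw [this, zero_smul, add_zero]
    have hgp' : g p = q := by
      rw [hgdef]
      simp only [LinearEquiv.trans_apply]
      rw [hgp_p, hσi, hgq]
      simp only [Pi.single_eq_same, one_smul]
      rw [← add_assoc]
      have : Pi.single j (1 : ZMod 2) + q + Pi.single j 1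
          = q + (Pi.single j 1 + Pi.single j 1) := by ring
      rw [this, vec_add_self, add_zero]
    have := hstab g hg0 hg1 p hpb
    rwa [hgp'] at this
  -- b is everything, contradiction with k < 2^d
  have hbuniv : b = Finset.univ := Finset.eq_univ_iff_forall.mpr hall
  have : b.card = 2 ^ d := by
    rw [hbuniv, Finset.card_univ]
    simp
  omega
end

section
/- Let p be a prime, q = p^a a prime power, m ≥ 2, and let V = GF(q)^m, so v = q^m. Let G be a group of permutations of V consisting of affine transformations x ↦ g(x) + u (g a p-semilinear invertible map on V fixing 0, u ∈ V) that contains all translations, and suppose the stabilizer G_0 of 0 in G contains SL(m,q), acting naturally on V, as a normal subgroup. Then there is no non-trivial Steiner 4-design and no non-trivial Steiner 5-design on the point set V admitting G as a block-transitive group of automorphisms. -/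
/-- The image of `SL(m,K)` in the symmetric group on `V = K^m`, i.e. the permutations of `V`
induced by matrices of determinant one. -/
def slPerm (m : ℕ) (K : Type*) [Field K] : Set (Equiv.Perm (Fin m → K)) :=
  {g | ∃ M : Matrix.SpecialLinearGroup (Fin m) K,
    ∀ x : Fin m → K, g x = (M : Matrix (Fin m) (Fin m) K).mulVec x}

set_option linter.unusedSectionVars false

section Aux

variable {K : Type*} [Field K] [Fintype K] [DecidableEq K] {m : ℕ}

/-- The transvection permutation `z ↦ z + z j • w`, for `w j = 0`. -/
def tperm (j : Fin m) (w : Fin m → K) (hw : w j = 0) : Equiv.Perm (Fin m → K) where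
  toFun z := z + z j • w
  invFun z := z - z j • w
  left_inv z := by
    have h : (z + z j • w) j = z j := by simp [hw]
    simp [h]
  right_inv z := by
    have h : (z - z j • w) j = z j := by simp [hw]
    simp [h]

lemma tperm_apply (j : Fin m) (w : Fin m → K) (hw : w j = 0) (z : Fin m → K) :
    tperm j w hw z = z + z j • w := rfl

lemma tperm_mem_slPerm (j : Fin m) (w : Fin m → K) (hw : w j = 0) :
    tperm j w hw ∈ slPerm m K := by
  have hdet : (1 + Matrix.replicateCol Unit w * Matrix.replicateRow Unit (Pi.single j (1:K))).det = 1 := by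
    rw [Matrix.det_one_add_replicateCol_mul_replicateRow, single_dotProduct, one_mul, hw, add_zero]
  refine ⟨⟨1 + Matrix.replicateCol Unit w * Matrix.replicateRow Unit (Pi.single j (1:K)), hdet⟩, ?_⟩
  intro x
  show x + x j • w = _
  rw [Matrix.add_mulVec, Matrix.one_mulVec]
  congr 1
  funext i
  rw [← Matrix.mulVec_mulVec]
  simp [Matrix.mulVec, dotProduct, Matrix.replicateCol, Matrix.replicateRow, Pi.single_apply,
    mul_comm]

/-- The dilation permutation multiplying coordinate `j` by `a` and `j'` by `a⁻¹`. -/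
def dperm (j j' : Fin m) (a : K) (ha : a ≠ 0) : Equiv.Perm (Fin m → K) where
  toFun z := fun i => (if i = j then a else if i = j' then a⁻¹ else 1) * z i
  invFun z := fun i => (if i = j then a else if i = j' then a⁻¹ else 1)⁻¹ * z i
  left_inv z := by
    funext i
    have h : (if i = j then a else if i = j' then a⁻¹ else 1) ≠ 0 := by
      split_ifs <;> simp [ha]
    show _⁻¹ * (_ * z i) = z i
    rw [← mul_assoc, inv_mul_cancel₀ h, one_mul]
  right_inv z := by
    funext i
    have h : (if i = j then a else if i = j' then a⁻¹ else 1) ≠ 0 := by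
      split_ifs <;> simp [ha]
    show _ * (_⁻¹ * z i) = z i
    rw [← mul_assoc, mul_inv_cancel₀ h, one_mul]

lemma dperm_apply (j j' : Fin m) (a : K) (ha : a ≠ 0) (z : Fin m → K) (i : Fin m) :
    dperm j j' a ha z i = (if i = j then a else if i = j' then a⁻¹ else 1) * z i := rfl

lemma dperm_mem_slPerm (j j' : Fin m) (hjj : j ≠ j') (a : K) (ha : a ≠ 0) :
    dperm j j' a ha ∈ slPerm m K := by
  set dv : Fin m → K := fun i => if i = j then a else if i = j' then a⁻¹ else 1 with hdv
  have hdet : (Matrix.diagonal dv).det = 1 := by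
    rw [Matrix.det_diagonal]
    have h1 : ∀ i ∈ Finset.univ, i ∉ ({j, j'} : Finset (Fin m)) → dv i = 1 := by
      intro i _ hi
      simp only [Finset.mem_insert, Finset.mem_singleton, not_or] at hi
      simp [hdv, hi.1, hi.2]
    rw [← Finset.prod_subset (Finset.subset_univ ({j, j'} : Finset (Fin m))) h1,
      Finset.prod_insert (by simpa using hjj), Finset.prod_singleton]
    simp [hdv, hjj, hjj.symm, mul_inv_cancel₀ ha]
  refine ⟨⟨Matrix.diagonal dv, hdet⟩, ?_⟩
  intro x
  funext i
  show dv i * x i = _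
  rw [Matrix.mulVec_diagonal]

end Aux

section Design

variable {K : Type*} [Field K] [Fintype K] [DecidableEq K] {m t k : ℕ}
variable {G : Subgroup (Equiv.Perm (Fin m → K))} {B : Finset (Finset (Fin m → K))}

lemma block_unique
    (hdesign : ∀ T : Finset (Fin m → K), T.card = t → (B.filter (fun b => T ⊆ b)).card = 1)
    {T b₁ b₂ : Finset (Fin m → K)} (hT : T.card = t) (h1 : b₁ ∈ B) (h2 : b₂ ∈ B)
    (hs1 : T ⊆ b₁) (hs2 : T ⊆ b₂) : b₁ = b₂ := by
  have h := hdesign T hT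
  have m1 : b₁ ∈ B.filter (fun b => T ⊆ b) := Finset.mem_filter.2 ⟨h1, hs1⟩
  have m2 : b₂ ∈ B.filter (fun b => T ⊆ b) := Finset.mem_filter.2 ⟨h2, hs2⟩
  exact Finset.card_le_one.1 h.le _ m1 _ m2

lemma block_exists
    (hdesign : ∀ T : Finset (Fin m → K), T.card = t → (B.filter (fun b => T ⊆ b)).card = 1)
    {T : Finset (Fin m → K)} (hT : T.card = t) : ∃ b ∈ B, T ⊆ b := by
  have h := hdesign T hT
  have : (B.filter (fun b => T ⊆ b)).Nonempty := Finset.card_pos.1 (by omega)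
  obtain ⟨b, hb⟩ := this
  exact ⟨b, (Finset.mem_filter.1 hb).1, (Finset.mem_filter.1 hb).2⟩

/-- The key rigidity principle: a group element mapping `t` points of a block into the block
stabilizes the block. -/
lemma star_principle
    (hdesign : ∀ T : Finset (Fin m → K), T.card = t → (B.filter (fun b => T ⊆ b)).card = 1)
    (hGaut : ∀ g ∈ G, ∀ b ∈ B, b.image (⇑g) ∈ B)
    {g : Equiv.Perm (Fin m → K)} (hg : g ∈ G) {b S : Finset (Fin m → K)}
    (hb : b ∈ B) (hSb : S ⊆ b) (hS : S.card = t) (him : S.image (⇑g) ⊆ b) :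
    b.image (⇑g) = b := by
  have hb' : b.image (⇑g) ∈ B := hGaut g hg b hb
  have hcard : (S.image (⇑g)).card = t := by
    rw [Finset.card_image_of_injective _ g.injective, hS]
  exact block_unique hdesign hcard hb' hb (Finset.image_subset_image hSb) him

end Design

section Counting

variable {α : Type*} [DecidableEq α]

lemma card_supersets (F b : Finset α) (hFb : F ⊆ b) (n : ℕ) (hn : F.card ≤ n) :
    ((b.powersetCard n).filter (fun T => F ⊆ T)).card
      = (b.card - F.card).choose (n - F.card) := by
  rw [← Finset.card_sdiff_of_subset hFb, ← Finset.card_powersetCard]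
  apply Finset.card_bij' (fun T _ => T \ F) (fun T' _ => T' ∪ F)
  · intro T hT
    rw [Finset.mem_filter, Finset.mem_powersetCard] at hT
    rw [Finset.mem_powersetCard]
    exact ⟨Finset.sdiff_subset_sdiff hT.1.1 (le_refl F),
      by rw [Finset.card_sdiff_of_subset hT.2, hT.1.2]⟩
  · intro T' hT'
    rw [Finset.mem_powersetCard] at hT'
    have hdisj : Disjoint T' F := Finset.disjoint_of_subset_left hT'.1 Finset.sdiff_disjoint
    rw [Finset.mem_filter, Finset.mem_powersetCard]
    refine ⟨⟨Finset.union_subset (hT'.1.trans (Finset.sdiff_subset)) hFb, ?_⟩,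
      Finset.subset_union_right⟩
    rw [Finset.card_union_of_disjoint hdisj, hT'.2]
    omega
  · intro T hT
    rw [Finset.mem_filter] at hT
    exact Finset.sdiff_union_of_subset hT.2
  · intro T' hT'
    rw [Finset.mem_powersetCard] at hT'
    have hdisj : Disjoint T' F := Finset.disjoint_of_subset_left hT'.1 Finset.sdiff_disjoint
    exact Finset.union_sdiff_cancel_right hdisj

end Counting

section Design2

variable {K : Type*} [Field K] [Fintype K] [DecidableEq K] {m t k : ℕ}
variable {B : Finset (Finset (Fin m → K))}

lemma lambda_count
    (hblocks : ∀ b ∈ B, b.card = k)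
    (hdesign : ∀ T : Finset (Fin m → K), T.card = t → (B.filter (fun b => T ⊆ b)).card = 1)
    (F : Finset (Fin m → K)) (hs : F.card ≤ t) :
    (B.filter (fun b => F ⊆ b)).card * (k - F.card).choose (t - F.card)
      = (Fintype.card (Fin m → K) - F.card).choose (t - F.card) := by
  classical
  set P := ((Finset.univ : Finset (Finset (Fin m → K))) : Finset _) with hPdummy
  clear_value P
  clear hPdummy P
  set Q := ((Finset.univ : Finset (Fin m → K)).powersetCard t).filter (fun T => F ⊆ T) with hQ
  have hcardQ : Q.card = (Fintype.card (Fin m → K) - F.card).choose (t - F.card) := by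
    rw [hQ, card_supersets F Finset.univ (Finset.subset_univ F) t hs, Finset.card_univ]
  have hsplit : Q = (B.filter (fun b => F ⊆ b)).biUnion
      (fun b => (b.powersetCard t).filter (fun T => F ⊆ T)) := by
    ext T
    simp only [hQ, Finset.mem_filter, Finset.mem_powersetCard, Finset.mem_biUnion]
    constructor
    · rintro ⟨⟨-, hTt⟩, hFT⟩
      obtain ⟨b, hbB, hTb⟩ := block_exists hdesign hTt
      exact ⟨b, ⟨hbB, hFT.trans hTb⟩, ⟨hTb, hTt⟩, hFT⟩
    · rintro ⟨b, -, ⟨hTb, hTt⟩, hFT⟩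
      exact ⟨⟨Finset.subset_univ T, hTt⟩, hFT⟩
  have hdisj : ∀ b₁ ∈ B.filter (fun b => F ⊆ b), ∀ b₂ ∈ B.filter (fun b => F ⊆ b), b₁ ≠ b₂ →
      Disjoint ((b₁.powersetCard t).filter (fun T => F ⊆ T))
        ((b₂.powersetCard t).filter (fun T => F ⊆ T)) := by
    intro b₁ h1 b₂ h2 hne
    rw [Finset.disjoint_left]
    intro T hT1 hT2
    rw [Finset.mem_filter, Finset.mem_powersetCard] at hT1 hT2
    exact hne (block_unique hdesign hT1.1.2 (Finset.mem_filter.1 h1).1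
      (Finset.mem_filter.1 h2).1 hT1.1.1 hT2.1.1)
  have hsum : Q.card = ∑ b ∈ B.filter (fun b => F ⊆ b),
      ((b.powersetCard t).filter (fun T => F ⊆ T)).card := by
    rw [hsplit, Finset.card_biUnion hdisj]
  rw [hsum] at hcardQ
  rw [← hcardQ, Finset.card_eq_sum_ones (B.filter (fun b => F ⊆ b)), Finset.sum_mul,
    one_mul]
  apply Finset.sum_congr rfl
  intro b hb
  rw [Finset.mem_filter] at hb
  rw [card_supersets F b hb.2 t hs, hblocks b hb.1]

end Design2

section Chain

variable {K : Type*} [Field K] [Fintype K] [DecidableEq K] {m t k : ℕ}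
variable {G : Subgroup (Equiv.Perm (Fin m → K))} {B : Finset (Finset (Fin m → K))}

lemma transvection_step
    (hdesign : ∀ T : Finset (Fin m → K), T.card = t → (B.filter (fun b => T ⊆ b)).card = 1)
    (hGaut : ∀ g ∈ G, ∀ b ∈ B, b.image (⇑g) ∈ B)
    (hSLsub : ∀ s ∈ slPerm m K, s ∈ G ∧ s 0 = 0)
    {b : Finset (Fin m → K)} (hbB : b ∈ B) {T : Finset (Fin m → K)}
    (hTb : T ⊆ b) (hTt : T.card = t) {j : Fin m} (hT0 : ∀ x ∈ T, x j = 0) :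
    ∀ z ∈ b, ∀ w : Fin m → K, w j = 0 → z + z j • w ∈ b := by
  intro z hz w hw
  set τ := tperm j w hw with hτ
  have hτG : τ ∈ G := (hSLsub τ (tperm_mem_slPerm j w hw)).1
  have himg : T.image (⇑τ) ⊆ b := by
    intro y hy
    obtain ⟨x, hx, rfl⟩ := Finset.mem_image.1 hy
    have : τ x = x := by
      rw [hτ, tperm_apply, hT0 x hx, zero_smul, add_zero]
    rw [this]
    exact hTb hx
  have hstab := star_principle hdesign hGaut hτG hbB hTb hTt himg
  have : τ z ∈ b := by
    rw [← hstab]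
    exact Finset.mem_image_of_mem _ hz
  rw [hτ, tperm_apply] at this
  exact this

lemma escape_chain
    (hm : 2 ≤ m)
    (htransl : ∀ u : Fin m → K, Equiv.addLeft u ∈ G)
    (hSLsub : ∀ s ∈ slPerm m K, s ∈ G ∧ s 0 = 0)
    (hblocks : ∀ b ∈ B, b.card = k)
    (hdesign : ∀ T : Finset (Fin m → K), T.card = t → (B.filter (fun b => T ⊆ b)).card = 1)
    (hGaut : ∀ g ∈ G, ∀ b ∈ B, b.image (⇑g) ∈ B)
    (hkv : k < Fintype.card (Fin m → K)) (ht : 0 < t)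
    (HT1 : ∀ j : Fin m, ∃ S : Finset (Fin m → K), S.card = t ∧ ∀ x ∈ S, x j = 0)
    {b : Finset (Fin m → K)} (hbB : b ∈ B) {j : Fin m}
    (hcard : t ≤ (b.filter (fun x => x j = 0)).card)
    {b₀ : Fin m → K} (hb₀ : b₀ ∈ b) (hb₀j : b₀ j ≠ 0) : False := by
  -- pick T₀ : t points of b with vanishing j-th coordinate
  obtain ⟨T₀, hT₀sub, hT₀card⟩ := Finset.exists_subset_card_eq hcard
  have hT₀b : T₀ ⊆ b := fun x hx => Finset.mem_of_mem_filter x (hT₀sub hx)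
  have hT₀0 : ∀ x ∈ T₀, x j = 0 := fun x hx => (Finset.mem_filter.1 (hT₀sub hx)).2
  have key := transvection_step hdesign hGaut hSLsub hbB hT₀b hT₀card hT₀0
  -- Step 2 : b₀ + w ∈ b for every w with w j = 0
  have st2 : ∀ w : Fin m → K, w j = 0 → b₀ + w ∈ b := by
    intro w hw
    have hw' : ((b₀ j)⁻¹ • w) j = 0 := by simp [hw]
    have := key b₀ hb₀ _ hw'
    rwa [smul_smul, mul_inv_cancel₀ hb₀j, one_smul] at this
  -- the translated block
  set b'' : Finset (Fin m → K) := b.image (⇑(Equiv.addLeft (-b₀))) with hb''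
  have hb''B : b'' ∈ B := hGaut _ (htransl (-b₀)) b hbB
  have hmem'' : ∀ x : Fin m → K, x ∈ b'' ↔ b₀ + x ∈ b := by
    intro x
    rw [hb'', Finset.mem_image]
    constructor
    · rintro ⟨z, hz, rfl⟩
      simpa [Equiv.addLeft] using hz
    · intro hx
      exact ⟨b₀ + x, hx, by simp [Equiv.addLeft]⟩
  have hK'' : ∀ x : Fin m → K, x j = 0 → x ∈ b'' := by
    intro x hx
    rw [hmem'']
    exact st2 x hx
  -- T₁ : pattern points inside the coordinate hyperplane, inside b''
  obtain ⟨T₁, hT₁card, hT₁0⟩ := HT1 j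
  have hT₁b'' : T₁ ⊆ b'' := fun x hx => hK'' x (hT₁0 x hx)
  have key'' := transvection_step hdesign hGaut hSLsub hb''B hT₁b'' hT₁card hT₁0
  -- Step 4 : the whole coordinate hyperplane is inside b
  have hT₀ne : T₀.Nonempty := by
    rw [← Finset.card_pos, hT₀card]
    exact ht
  obtain ⟨s₀, hs₀⟩ := hT₀ne
  have hs₀j : s₀ j = 0 := hT₀0 s₀ hs₀
  have st4 : ∀ x : Fin m → K, x j = 0 → x ∈ b := by
    intro x hx
    have hz : -b₀ + s₀ ∈ b'' := by
      rw [hmem'']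
      simpa using hT₀b hs₀
    have hzj : (-b₀ + s₀) j ≠ 0 := by
      simp [hs₀j, hb₀j]
    have hwj : (((-b₀ + s₀) j)⁻¹ • (x - s₀)) j = 0 := by
      simp [hx, hs₀j]
    have hmem := key'' _ hz _ hwj
    rw [smul_smul, mul_inv_cancel₀ hzj, one_smul] at hmem
    have : -b₀ + s₀ + (x - s₀) = -b₀ + x := by ring
    rw [this, hmem''] at hmem
    simpa using hmem
  -- Step 5 : dilations
  have hjm : 1 < Fintype.card (Fin m) := by
    rw [Fintype.card_fin]
    exact lt_of_lt_of_le one_lt_two hm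
  obtain ⟨j', hj'⟩ := Fintype.exists_ne_of_one_lt_card hjm j
  have st5 : ∀ a : K, ∀ (ha : a ≠ 0), (dperm j j' a ha) b₀ ∈ b := by
    intro a ha
    set d := dperm j j' a ha with hd
    have hdG : d ∈ G := (hSLsub d (dperm_mem_slPerm j j' hj'.symm a ha)).1
    have himg : T₀.image (⇑d) ⊆ b := by
      intro y hy
      obtain ⟨x, hx, rfl⟩ := Finset.mem_image.1 hy
      apply st4
      rw [hd, dperm_apply]
      simp [hT₀0 x hx]
    have hstab := star_principle hdesign hGaut hdG hbB hT₀b hT₀card himg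
    rw [← hstab]
    exact Finset.mem_image_of_mem _ hb₀
  -- Step 6 : every point is in b
  have st6 : ∀ x : Fin m → K, x ∈ b := by
    intro x
    by_cases hx : x j = 0
    · exact st4 x hx
    · set a := x j * (b₀ j)⁻¹ with hadef
      have ha : a ≠ 0 := by
        apply mul_ne_zero hx
        exact inv_ne_zero hb₀j
      set z : Fin m → K := (dperm j j' a ha) b₀ with hzdef
      have hz : z ∈ b := st5 a ha
      have hzj : z j = x j := by
        rw [hzdef, dperm_apply]
        simp [hadef]
        field_simp
      have hwj : ((z j)⁻¹ • (x - z)) j = 0 := by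
        simp [hzj]
      have hmem := key z hz _ hwj
      rw [smul_smul, hzj] at hmem
      rw [mul_inv_cancel₀ hx, one_smul] at hmem
      have : z + (x - z) = x := by ring
      rwa [this] at hmem
  -- conclusion : b = univ, contradicting k < v
  have : b = Finset.univ := Finset.eq_univ_of_forall st6
  have hcardb : b.card = Fintype.card (Fin m → K) := by
    rw [this, Finset.card_univ]
  rw [hblocks b hbB] at hcardb
  exact absurd hcardb (Nat.ne_of_lt hkv)

end Chain

section NoEscape

variable {K : Type*} [Field K] [Fintype K] [DecidableEq K] {m t k : ℕ}
variable {G : Subgroup (Equiv.Perm (Fin m → K))} {B : Finset (Finset (Fin m → K))}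

lemma no_escape_case
    (haffine : ∀ g ∈ G, ∃ (σ : K ≃+* K) (f : (Fin m → K) ≃+ (Fin m → K)) (u : Fin m → K),
      (∀ (c : K) (x : Fin m → K), f (c • x) = σ c • f x) ∧
      ∀ x : Fin m → K, (g : Equiv.Perm (Fin m → K)) x = f x + u)
    (hdesign : ∀ T : Finset (Fin m → K), T.card = t → (B.filter (fun b => T ⊆ b)).card = 1)
    (hGbt : ∀ b₁ ∈ B, ∀ b₂ ∈ B, ∃ g ∈ G, b₁.image (⇑g) = b₂)
    (hNE : ∀ b ∈ B, ∀ j : Fin m, t ≤ (b.filter (fun x => x j = 0)).card → ∀ x ∈ b, x j = 0)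
    (R R' : Finset (Fin m)) (hRR' : R.card < R'.card)
    (S₂ : Finset (Fin m → K)) (hS₂card : S₂.card = t)
    (hS₂supp : ∀ x ∈ S₂, ∀ j, j ∉ R → x j = 0)
    (S₁ : Finset (Fin m → K)) (hS₁card : S₁.card = t) (hS₁0 : (0 : Fin m → K) ∈ S₁)
    (hS₁e : ∀ i ∈ R', Pi.single i (1:K) ∈ S₁) : False := by
  classical
  obtain ⟨b₂, hb₂B, hS₂b⟩ := block_exists hdesign hS₂card
  obtain ⟨b₁, hb₁B, hS₁b⟩ := block_exists hdesign hS₁card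
  -- every point of b₂ is supported in R
  have hU : ∀ x ∈ b₂, ∀ j, j ∉ R → x j = 0 := by
    intro x hx j hj
    apply hNE b₂ hb₂B j _ x hx
    calc t = S₂.card := hS₂card.symm
    _ ≤ (b₂.filter (fun x => x j = 0)).card := by
        apply Finset.card_le_card
        intro y hy
        exact Finset.mem_filter.2 ⟨hS₂b hy, hS₂supp y hy j hj⟩
  obtain ⟨g, hgG, hgim⟩ := hGbt b₂ hb₂B b₁ hb₁B
  obtain ⟨σ, f, u, hsem, hgx⟩ := haffine g hgG
  -- preimage of 0
  have h0 : (0 : Fin m → K) ∈ b₂.image (⇑g) := by rw [hgim]; exact hS₁b hS₁0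
  obtain ⟨u₀, hu₀b, hu₀⟩ := Finset.mem_image.1 h0
  have hfu₀ : f u₀ + u = 0 := by rw [← hgx]; exact hu₀
  -- preimages of the basis vectors
  have hw : ∀ i : {i // i ∈ R'}, ∃ w, w ∈ b₂ ∧ f (w - u₀) = Pi.single i.1 (1:K) := by
    intro i
    have h1 : Pi.single i.1 (1:K) ∈ b₂.image (⇑g) := by
      rw [hgim]; exact hS₁b (hS₁e i.1 i.2)
    obtain ⟨w, hwb, hweq⟩ := Finset.mem_image.1 h1
    refine ⟨w, hwb, ?_⟩
    rw [map_sub]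
    have h2 : f w + u = Pi.single i.1 (1:K) := by rw [← hgx]; exact hweq
    have h3 : f u₀ = -u := by linear_combination (norm := abel) hfu₀
    rw [h3]
    linear_combination (norm := abel) h2
  set v : {i // i ∈ R'} → (Fin m → K) := fun i => Classical.choose (hw i) - u₀ with hv
  have hvf : ∀ i, f (v i) = Pi.single i.1 (1:K) := fun i => (Classical.choose_spec (hw i)).2
  have hvsupp : ∀ i, ∀ j, j ∉ R → v i j = 0 := by
    intro i j hj
    have h1 := hU _ (Classical.choose_spec (hw i)).1 j hj
    have h2 := hU u₀ hu₀b j hj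
    simp only [hv, Pi.sub_apply, h1, h2, sub_zero]
  -- linear independence of restrictions
  set ρ : ((Fin m → K)) →ₗ[K] ({j // j ∈ R} → K) :=
    LinearMap.funLeft K K (Subtype.val) with hρ
  have hli : LinearIndependent K (fun i : {i // i ∈ R'} => ρ (v i)) := by
    rw [Fintype.linearIndependent_iff]
    intro c hc
    have hz : (∑ i, c i • v i) = 0 := by
      funext j
      by_cases hj : j ∈ R
      · have := congrFun hc ⟨j, hj⟩
        simpa [hρ, LinearMap.funLeft, Finset.sum_apply] using this
      · rw [Finset.sum_apply]
        simp only [Pi.smul_apply, smul_eq_mul, Pi.zero_apply]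
        apply Finset.sum_eq_zero
        intro i _
        rw [hvsupp i j hj, mul_zero]
    have hzf : f (∑ i, c i • v i) = 0 := by rw [hz, map_zero]
    rw [map_sum] at hzf
    have hzf2 : (∑ i, σ (c i) • (Pi.single i.1 (1:K) : Fin m → K)) = 0 := by
      rw [← hzf]
      apply Finset.sum_congr rfl
      intro i _
      rw [hsem, hvf]
    intro i₀
    have := congrFun hzf2 i₀.1
    rw [Finset.sum_apply] at this
    simp only [Pi.smul_apply, Pi.zero_apply, smul_eq_mul] at this
    rw [Finset.sum_eq_single i₀] at this
    · simp only [Pi.single_eq_same, mul_one] at this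
      have : σ (c i₀) = σ 0 := by rw [this, map_zero]
      exact σ.injective this
    · intro i _ hne
      have hne' : i.1 ≠ i₀.1 := fun h => hne (Subtype.ext h)
      rw [Pi.single_eq_of_ne' hne', mul_zero]
    · intro h
      exact absurd (Finset.mem_univ i₀) h
  have hcard := hli.fintype_card_le_finrank
  rw [Module.finrank_pi] at hcard
  simp only [Fintype.card_coe] at hcard
  omega

end NoEscape

section Patterns

variable {K : Type*} [Field K] [Fintype K] [DecidableEq K] {m : ℕ}

lemma single_ne_zero' (i : Fin m) : (Pi.single i (1:K) : Fin m → K) ≠ 0 := by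
  intro h
  have := congrFun h i
  simp at this

lemma single_ne_single' {i₁ i₂ : Fin m} (h : i₁ ≠ i₂) :
    (Pi.single i₁ (1:K) : Fin m → K) ≠ Pi.single i₂ (1:K) := by
  intro heq
  have := congrFun heq i₁
  simp [Pi.single_eq_of_ne h] at this

lemma pattern_line (i : Fin m) (n : ℕ) (hn : n ≤ Fintype.card K) :
    ∃ S : Finset (Fin m → K), S.card = n ∧ ∀ x ∈ S, ∀ j, j ≠ i → x j = 0 := by
  obtain ⟨T, -, hTcard⟩ := Finset.exists_subset_card_eq
    (show n ≤ (Finset.univ : Finset K).card by rwa [Finset.card_univ])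
  refine ⟨T.image (fun c => c • (Pi.single i (1:K) : Fin m → K)), ?_, ?_⟩
  · rw [Finset.card_image_of_injective _ ?_, hTcard]
    intro c₁ c₂ h
    have := congrFun h i
    simpa using this
  · intro x hx j hj
    obtain ⟨c, -, rfl⟩ := Finset.mem_image.1 hx
    simp [Pi.single_eq_of_ne hj]

lemma pattern_B (i₁ i₂ : Fin m) (h : i₁ ≠ i₂) :
    ∃ S : Finset (Fin m → K), S.card = 4 ∧
      (∀ x ∈ S, ∀ j, j ≠ i₁ → j ≠ i₂ → x j = 0) ∧
      (0 : Fin m → K) ∈ S ∧ Pi.single i₁ (1:K) ∈ S ∧ Pi.single i₂ (1:K) ∈ S := by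
  set e₁ : Fin m → K := Pi.single i₁ (1:K) with he₁
  set e₂ : Fin m → K := Pi.single i₂ (1:K) with he₂
  have h12 : e₁ i₂ = 0 := Pi.single_eq_of_ne h.symm 1
  have h21 : e₂ i₁ = 0 := Pi.single_eq_of_ne h 1
  refine ⟨{0, e₁, e₂, e₁ + e₂}, ?_, ?_, ?_, ?_, ?_⟩
  · have n1 : e₁ ≠ 0 := single_ne_zero' i₁
    have n2 : e₂ ≠ 0 := single_ne_zero' i₂
    have n12 : e₁ ≠ e₂ := single_ne_single' h
    have n3 : e₁ + e₂ ≠ 0 := by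
      intro hq; have := congrFun hq i₁; simp [he₁, h21] at this
    have n4 : e₁ + e₂ ≠ e₁ := by
      intro hq; have := congrFun hq i₂; simp [he₂, h12] at this
    have n5 : e₁ + e₂ ≠ e₂ := by
      intro hq; have := congrFun hq i₁; simp [he₁, h21] at this
    rw [Finset.card_insert_of_notMem (by simp [n1.symm, n2.symm, n3.symm]),
      Finset.card_insert_of_notMem (by simp [n12, n4.symm]),
      Finset.card_insert_of_notMem (by simp [n5.symm]), Finset.card_singleton]
  · intro x hx j hj1 hj2
    have hz : (0 : Fin m → K) j = 0 := rfl
    have hz1 : e₁ j = 0 := Pi.single_eq_of_ne hj1 1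
    have hz2 : e₂ j = 0 := Pi.single_eq_of_ne hj2 1
    simp only [Finset.mem_insert, Finset.mem_singleton] at hx
    rcases hx with rfl | rfl | rfl | rfl
    · exact hz
    · exact hz1
    · exact hz2
    · simp [hz1, hz2]
  · simp
  · simp [he₁]
  · simp [he₂]

end Patterns

section Patterns2

variable {K : Type*} [Field K] [Fintype K] [DecidableEq K] {m : ℕ}

lemma exists_c0 (hK : 3 ≤ Fintype.card K) : ∃ c : K, c ≠ 0 ∧ c ≠ 1 := by
  have h01 : ({0, 1} : Finset K).card = 2 := by
    rw [Finset.card_insert_of_notMem (by simp), Finset.card_singleton]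
  have : 0 < (Finset.univ \ ({0, 1} : Finset K)).card := by
    rw [Finset.card_sdiff_of_subset (Finset.subset_univ _), Finset.card_univ, h01]
    omega
  obtain ⟨c, hc⟩ := Finset.card_pos.1 this
  rw [Finset.mem_sdiff] at hc
  simp only [Finset.mem_insert, Finset.mem_singleton, not_or] at hc
  exact ⟨c, hc.2.1, hc.2.2⟩

lemma pattern_C (i₁ i₂ : Fin m) (h : i₁ ≠ i₂) (hK : 3 ≤ Fintype.card K) :
    ∃ S : Finset (Fin m → K), S.card = 5 ∧
      (∀ x ∈ S, ∀ j, j ≠ i₁ → j ≠ i₂ → x j = 0) ∧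
      (0 : Fin m → K) ∈ S ∧ Pi.single i₁ (1:K) ∈ S ∧ Pi.single i₂ (1:K) ∈ S := by
  obtain ⟨c₀, hc0, hc1⟩ := exists_c0 hK
  set e₁ : Fin m → K := Pi.single i₁ (1:K) with he₁
  set e₂ : Fin m → K := Pi.single i₂ (1:K) with he₂
  have h12 : e₁ i₂ = 0 := Pi.single_eq_of_ne h.symm 1
  have h21 : e₂ i₁ = 0 := Pi.single_eq_of_ne h 1
  have h11 : e₁ i₁ = 1 := Pi.single_eq_same i₁ 1
  have h22 : e₂ i₂ = 1 := Pi.single_eq_same i₂ 1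
  refine ⟨{0, e₁, c₀ • e₁, e₂, e₁ + e₂}, ?_, ?_, ?_, ?_, ?_⟩
  · have n1 : e₁ ≠ 0 := single_ne_zero' i₁
    have n2 : e₂ ≠ 0 := single_ne_zero' i₂
    have n12 : e₁ ≠ e₂ := single_ne_single' h
    have nc0 : c₀ • e₁ ≠ 0 := by
      intro hq; have := congrFun hq i₁; simp [h11, hc0] at this
    have nce1 : c₀ • e₁ ≠ e₁ := by
      intro hq; have := congrFun hq i₁; simp [h11, hc1] at this
    have nce2 : c₀ • e₁ ≠ e₂ := by
      intro hq; have := congrFun hq i₁; simp [h11, h21, hc0] at this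
    have nce3 : c₀ • e₁ ≠ e₁ + e₂ := by
      intro hq; have := congrFun hq i₂; simp [h12, h22] at this
    have n3 : e₁ + e₂ ≠ 0 := by
      intro hq; have := congrFun hq i₁; simp [h11, h21] at this
    have n4 : e₁ + e₂ ≠ e₁ := by
      intro hq; have := congrFun hq i₂; simp [h12, h22] at this
    have n5 : e₁ + e₂ ≠ e₂ := by
      intro hq; have := congrFun hq i₁; simp [h11, h21] at this
    rw [Finset.card_insert_of_notMem (by simp [n1.symm, nc0.symm, n2.symm, n3.symm]),
      Finset.card_insert_of_notMem (by simp [nce1.symm, n12, n4.symm]),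
      Finset.card_insert_of_notMem (by simp [nce2, nce3]),
      Finset.card_insert_of_notMem (by simp [n5.symm]), Finset.card_singleton]
  · intro x hx j hj1 hj2
    have hz1 : e₁ j = 0 := Pi.single_eq_of_ne hj1 1
    have hz2 : e₂ j = 0 := Pi.single_eq_of_ne hj2 1
    simp only [Finset.mem_insert, Finset.mem_singleton] at hx
    rcases hx with rfl | rfl | rfl | rfl | rfl
    · rfl
    · exact hz1
    · simp [hz1]
    · exact hz2
    · simp [hz1, hz2]
  · simp
  · rw [he₁]; simp
  · rw [he₂]; simp

lemma pattern_D (i₁ i₂ i₃ : Fin m) (h12 : i₁ ≠ i₂) (h13 : i₁ ≠ i₃) (h23 : i₂ ≠ i₃) :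
    ∃ S : Finset (Fin m → K), S.card = 5 ∧
      (∀ x ∈ S, ∀ j, j ≠ i₁ → j ≠ i₂ → j ≠ i₃ → x j = 0) ∧
      (0 : Fin m → K) ∈ S ∧ Pi.single i₁ (1:K) ∈ S ∧ Pi.single i₂ (1:K) ∈ S ∧
      Pi.single i₃ (1:K) ∈ S := by
  set e₁ : Fin m → K := Pi.single i₁ (1:K) with he₁
  set e₂ : Fin m → K := Pi.single i₂ (1:K) with he₂
  set e₃ : Fin m → K := Pi.single i₃ (1:K) with he₃
  have he₁₂ : e₁ i₂ = 0 := Pi.single_eq_of_ne h12.symm 1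
  have he₂₁ : e₂ i₁ = 0 := Pi.single_eq_of_ne h12 1
  have he₁₃ : e₁ i₃ = 0 := Pi.single_eq_of_ne h13.symm 1
  have he₃₁ : e₃ i₁ = 0 := Pi.single_eq_of_ne h13 1
  have he₂₃ : e₂ i₃ = 0 := Pi.single_eq_of_ne h23.symm 1
  have he₃₂ : e₃ i₂ = 0 := Pi.single_eq_of_ne h23 1
  have h11 : e₁ i₁ = 1 := Pi.single_eq_same i₁ 1
  have h22 : e₂ i₂ = 1 := Pi.single_eq_same i₂ 1
  have h33 : e₃ i₃ = 1 := Pi.single_eq_same i₃ 1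
  refine ⟨{0, e₁, e₂, e₃, e₁ + e₂}, ?_, ?_, ?_, ?_, ?_, ?_⟩
  · have n1 : e₁ ≠ 0 := single_ne_zero' i₁
    have n2 : e₂ ≠ 0 := single_ne_zero' i₂
    have n3 : e₃ ≠ 0 := single_ne_zero' i₃
    have n12 : e₁ ≠ e₂ := single_ne_single' h12
    have n13 : e₁ ≠ e₃ := single_ne_single' h13
    have n23 : e₂ ≠ e₃ := single_ne_single' h23
    have ns0 : e₁ + e₂ ≠ 0 := by
      intro hq; have := congrFun hq i₁; simp [h11, he₂₁] at this
    have ns1 : e₁ + e₂ ≠ e₁ := by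
      intro hq; have := congrFun hq i₂; simp [he₁₂, h22] at this
    have ns2 : e₁ + e₂ ≠ e₂ := by
      intro hq; have := congrFun hq i₁; simp [h11, he₂₁] at this
    have ns3 : e₁ + e₂ ≠ e₃ := by
      intro hq; have := congrFun hq i₁; simp [h11, he₂₁, he₃₁] at this
    rw [Finset.card_insert_of_notMem (by simp [n1.symm, n2.symm, n3.symm, ns0.symm]),
      Finset.card_insert_of_notMem (by simp [n12, n13, ns1.symm]),
      Finset.card_insert_of_notMem (by simp [n23, ns2.symm]),
      Finset.card_insert_of_notMem (by simp [ns3.symm]), Finset.card_singleton]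
  · intro x hx j hj1 hj2 hj3
    have hz1 : e₁ j = 0 := Pi.single_eq_of_ne hj1 1
    have hz2 : e₂ j = 0 := Pi.single_eq_of_ne hj2 1
    have hz3 : e₃ j = 0 := Pi.single_eq_of_ne hj3 1
    simp only [Finset.mem_insert, Finset.mem_singleton] at hx
    rcases hx with rfl | rfl | rfl | rfl | rfl
    · rfl
    · exact hz1
    · exact hz2
    · exact hz3
    · simp [hz1, hz2]
  · simp
  · rw [he₁]; simp
  · rw [he₂]; simp
  · rw [he₃]; simp

lemma pattern_E (i₁ i₂ i₃ : Fin m) (h12 : i₁ ≠ i₂) (h13 : i₁ ≠ i₃) (h23 : i₂ ≠ i₃) :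
    ∃ S : Finset (Fin m → K), S.card = 4 ∧
      (0 : Fin m → K) ∈ S ∧ Pi.single i₁ (1:K) ∈ S ∧ Pi.single i₂ (1:K) ∈ S ∧
      Pi.single i₃ (1:K) ∈ S := by
  set e₁ : Fin m → K := Pi.single i₁ (1:K) with he₁
  set e₂ : Fin m → K := Pi.single i₂ (1:K) with he₂
  set e₃ : Fin m → K := Pi.single i₃ (1:K) with he₃
  refine ⟨{0, e₁, e₂, e₃}, ?_, ?_, ?_, ?_, ?_⟩
  · have n1 : e₁ ≠ 0 := single_ne_zero' i₁
    have n2 : e₂ ≠ 0 := single_ne_zero' i₂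
    have n3 : e₃ ≠ 0 := single_ne_zero' i₃
    have n12 : e₁ ≠ e₂ := single_ne_single' h12
    have n13 : e₁ ≠ e₃ := single_ne_single' h13
    have n23 : e₂ ≠ e₃ := single_ne_single' h23
    rw [Finset.card_insert_of_notMem (by simp [n1.symm, n2.symm, n3.symm]),
      Finset.card_insert_of_notMem (by simp [n12, n13]),
      Finset.card_insert_of_notMem (by simp [n23]), Finset.card_singleton]
  · simp
  · rw [he₁]; simp
  · rw [he₂]; simp
  · rw [he₃]; simp

lemma pattern_F (i₁ i₂ i₃ i₄ : Fin m) (h12 : i₁ ≠ i₂) (h13 : i₁ ≠ i₃) (h14 : i₁ ≠ i₄)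
    (h23 : i₂ ≠ i₃) (h24 : i₂ ≠ i₄) (h34 : i₃ ≠ i₄) :
    ∃ S : Finset (Fin m → K), S.card = 5 ∧
      (0 : Fin m → K) ∈ S ∧ Pi.single i₁ (1:K) ∈ S ∧ Pi.single i₂ (1:K) ∈ S ∧
      Pi.single i₃ (1:K) ∈ S ∧ Pi.single i₄ (1:K) ∈ S := by
  set e₁ : Fin m → K := Pi.single i₁ (1:K) with he₁
  set e₂ : Fin m → K := Pi.single i₂ (1:K) with he₂
  set e₃ : Fin m → K := Pi.single i₃ (1:K) with he₃
  set e₄ : Fin m → K := Pi.single i₄ (1:K) with he₄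
  refine ⟨{0, e₁, e₂, e₃, e₄}, ?_, ?_, ?_, ?_, ?_, ?_⟩
  · have n1 : e₁ ≠ 0 := single_ne_zero' i₁
    have n2 : e₂ ≠ 0 := single_ne_zero' i₂
    have n3 : e₃ ≠ 0 := single_ne_zero' i₃
    have n4 : e₄ ≠ 0 := single_ne_zero' i₄
    have n12 : e₁ ≠ e₂ := single_ne_single' h12
    have n13 : e₁ ≠ e₃ := single_ne_single' h13
    have n14 : e₁ ≠ e₄ := single_ne_single' h14
    have n23 : e₂ ≠ e₃ := single_ne_single' h23
    have n24 : e₂ ≠ e₄ := single_ne_single' h24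
    have n34 : e₃ ≠ e₄ := single_ne_single' h34
    rw [Finset.card_insert_of_notMem (by simp [n1.symm, n2.symm, n3.symm, n4.symm]),
      Finset.card_insert_of_notMem (by simp [n12, n13, n14]),
      Finset.card_insert_of_notMem (by simp [n23, n24]),
      Finset.card_insert_of_notMem (by simp [n34]), Finset.card_singleton]
  · simp
  · rw [he₁]; simp
  · rw [he₂]; simp
  · rw [he₃]; simp
  · rw [he₄]; simp

end Patterns2

section GeneralBranch

variable {K : Type*} [Field K] [Fintype K] [DecidableEq K] {m t k : ℕ}
variable {G : Subgroup (Equiv.Perm (Fin m → K))} {B : Finset (Finset (Fin m → K))}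

lemma general_branch
    (hm : 2 ≤ m)
    (haffine : ∀ g ∈ G, ∃ (σ : K ≃+* K) (f : (Fin m → K) ≃+ (Fin m → K)) (u : Fin m → K),
      (∀ (c : K) (x : Fin m → K), f (c • x) = σ c • f x) ∧
      ∀ x : Fin m → K, (g : Equiv.Perm (Fin m → K)) x = f x + u)
    (htransl : ∀ u : Fin m → K, Equiv.addLeft u ∈ G)
    (hSLsub : ∀ s ∈ slPerm m K, s ∈ G ∧ s 0 = 0)
    (hblocks : ∀ b ∈ B, b.card = k)
    (hdesign : ∀ T : Finset (Fin m → K), T.card = t → (B.filter (fun b => T ⊆ b)).card = 1)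
    (hGaut : ∀ g ∈ G, ∀ b ∈ B, b.image (⇑g) ∈ B)
    (hGbt : ∀ b₁ ∈ B, ∀ b₂ ∈ B, ∃ g ∈ G, b₁.image (⇑g) = b₂)
    (hkv : k < Fintype.card (Fin m → K)) (ht : 0 < t)
    (HT1 : ∀ j : Fin m, ∃ S : Finset (Fin m → K), S.card = t ∧ ∀ x ∈ S, x j = 0)
    (R R' : Finset (Fin m)) (hRR' : R.card < R'.card)
    (S₂ : Finset (Fin m → K)) (hS₂card : S₂.card = t)
    (hS₂supp : ∀ x ∈ S₂, ∀ j, j ∉ R → x j = 0)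
    (S₁ : Finset (Fin m → K)) (hS₁card : S₁.card = t) (hS₁0 : (0 : Fin m → K) ∈ S₁)
    (hS₁e : ∀ i ∈ R', Pi.single i (1:K) ∈ S₁) : False := by
  by_cases hesc : ∃ b ∈ B, ∃ j : Fin m,
      t ≤ (b.filter (fun x => x j = 0)).card ∧ ∃ x ∈ b, x j ≠ 0
  · obtain ⟨b, hbB, j, hcard, x, hx, hxj⟩ := hesc
    exact escape_chain hm htransl hSLsub hblocks hdesign hGaut hkv ht HT1 hbB hcard hx hxj
  · push_neg at hesc
    exact no_escape_case haffine hdesign hGbt hesc R R' hRR' S₂ hS₂card hS₂supp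
      S₁ hS₁card hS₁0 hS₁e

lemma lambda_eq
    (hblocks : ∀ b ∈ B, b.card = k)
    (hdesign : ∀ T : Finset (Fin m → K), T.card = t → (B.filter (fun b => T ⊆ b)).card = 1)
    (s : ℕ) (hs : s ≤ t) (hsv : s ≤ Fintype.card (Fin m → K)) :
    ∃ lam : ℕ, lam * (k - s).choose (t - s)
      = (Fintype.card (Fin m → K) - s).choose (t - s) := by
  obtain ⟨F, -, hF⟩ := Finset.exists_subset_card_eq
    (show s ≤ (Finset.univ : Finset (Fin m → K)).card by rwa [Finset.card_univ])
  refine ⟨(B.filter (fun b => F ⊆ b)).card, ?_⟩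
  have := lambda_count hblocks hdesign F (by omega : F.card ≤ t)
  rwa [hF] at this

end GeneralBranch

section Bespoke

variable {K : Type*} [Field K] [Fintype K] [DecidableEq K]

lemma bespoke16 (hK4 : Fintype.card K = 4)
    {G : Subgroup (Equiv.Perm (Fin 2 → K))} {B : Finset (Finset (Fin 2 → K))}
    (haffine : ∀ g ∈ G, ∃ (σ : K ≃+* K) (f : (Fin 2 → K) ≃+ (Fin 2 → K)) (u : Fin 2 → K),
      (∀ (c : K) (x : Fin 2 → K), f (c • x) = σ c • f x) ∧
      ∀ x : Fin 2 → K, (g : Equiv.Perm (Fin 2 → K)) x = f x + u)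
    (htransl : ∀ u : Fin 2 → K, Equiv.addLeft u ∈ G)
    (hSLsub : ∀ s ∈ slPerm 2 K, s ∈ G ∧ s 0 = 0)
    (hblocks : ∀ b ∈ B, b.card = 6)
    (hdesign : ∀ T : Finset (Fin 2 → K), T.card = 5 → (B.filter (fun b => T ⊆ b)).card = 1)
    (hGaut : ∀ g ∈ G, ∀ b ∈ B, b.image (⇑g) ∈ B)
    (hGbt : ∀ b₁ ∈ B, ∀ b₂ ∈ B, ∃ g ∈ G, b₁.image (⇑g) = b₂) : False := by
  classical
  have h1K : (1:K) ≠ 0 := one_ne_zero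
  have h10 : (1 : Fin 2) ≠ 0 := by decide
  set x : Fin 2 → K := Pi.single 0 (1:K) with hx
  set y : Fin 2 → K := Pi.single 1 (1:K) with hy
  have hx0 : x 0 = 1 := Pi.single_eq_same 0 1
  have hx1 : x 1 = 0 := Pi.single_eq_of_ne h10 1
  have hy0 : y 0 = 0 := Pi.single_eq_of_ne h10.symm 1
  have hy1 : y 1 = 1 := Pi.single_eq_same 1 1
  set L : Finset (Fin 2 → K) := Finset.univ.image (fun c : K => c • x) with hL
  have hLmem : ∀ z : Fin 2 → K, z ∈ L ↔ z 1 = 0 := by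
    intro z
    rw [hL, Finset.mem_image]
    constructor
    · rintro ⟨c, -, rfl⟩
      simp [hx1]
    · intro hz
      refine ⟨z 0, Finset.mem_univ _, ?_⟩
      funext i
      fin_cases i
      · simp [hx0]
      · simp [hx1, hz]
  have hLcard : L.card = 4 := by
    rw [hL, Finset.card_image_of_injective _ ?_, Finset.card_univ, hK4]
    intro c₁ c₂ h
    have := congrFun h 0
    simpa [hx0] using this
  have hyL : y ∉ L := by
    intro h
    rw [hLmem, hy1] at h
    exact h1K h
  set T₀ : Finset (Fin 2 → K) := insert y L with hT₀
  have hT₀card : T₀.card = 5 := by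
    rw [hT₀, Finset.card_insert_of_notMem hyL, hLcard]
  obtain ⟨B₀, hB₀B, hT₀B₀⟩ := block_exists hdesign hT₀card
  have hB₀card : B₀.card = 6 := hblocks B₀ hB₀B
  have hsd : (B₀ \ T₀).card = 1 := by
    rw [Finset.card_sdiff_of_subset hT₀B₀, hB₀card, hT₀card]
  obtain ⟨y'', hy''⟩ := Finset.card_eq_one.1 hsd
  have hy''mem : y'' ∈ B₀ \ T₀ := by rw [hy'']; exact Finset.mem_singleton_self y''
  have hy''B : y'' ∈ B₀ := (Finset.mem_sdiff.1 hy''mem).1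
  have hy''T : y'' ∉ T₀ := (Finset.mem_sdiff.1 hy''mem).2
  have hB₀eq : B₀ = insert y'' T₀ := by
    have h1 := Finset.sdiff_union_of_subset hT₀B₀
    rw [hy''] at h1
    rw [← h1, Finset.insert_eq]
  -- rigidity : B₀ is stable under z ↦ z + (z 1 - 1) • (b • x)
  have hbx1 : ∀ b : K, (b • x) 1 = 0 := by intro b; simp [hx1]
  have hgbB₀ : ∀ b : K, ∀ z ∈ B₀, z + (z 1 - 1) • (b • x) ∈ B₀ := by
    intro b z hz
    set gb : Equiv.Perm (Fin 2 → K) :=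
      (Equiv.addLeft (-(b • x))) * (tperm 1 (b • x) (hbx1 b)) with hgbdef
    have hgbG : gb ∈ G :=
      G.mul_mem (htransl _) ((hSLsub _ (tperm_mem_slPerm _ _ _)).1)
    have hgbap : ∀ w : Fin 2 → K, gb w = w + (w 1 - 1) • (b • x) := by
      intro w
      show -(b•x) + (w + w 1 • (b•x)) = _
      rw [sub_smul, one_smul]
      abel
    have hgbT : T₀.image (⇑gb) ⊆ T₀ := by
      intro w hw
      obtain ⟨z', hz', rfl⟩ := Finset.mem_image.1 hw
      rw [hT₀, Finset.mem_insert] at hz'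
      rcases hz' with rfl | hz'
      · rw [hgbap, hy1]
        simp [hT₀]
      · have hz1 : z' 1 = 0 := (hLmem z').1 hz'
        rw [hT₀, Finset.mem_insert]
        right
        rw [hLmem, hgbap]
        simp [hz1, hbx1]
    have hstab := star_principle hdesign hGaut hgbG hB₀B hT₀B₀ hT₀card
      (hgbT.trans hT₀B₀)
    have hmm : gb z ∈ B₀ := by
      rw [← hstab]
      exact Finset.mem_image_of_mem _ hz
    rwa [hgbap] at hmm
  -- the sixth point lies on the line through y in direction x
  have hy''1 : y'' 1 = 1 := by
    by_contra hne
    have h1 := hgbB₀ 1 y'' hy''B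
    rw [smul_smul, mul_one] at h1
    have hco1 : (y'' + (y'' 1 - 1) • x) 1 = y'' 1 := by simp [hx1]
    have hmem : y'' + (y'' 1 - 1) • x ∉ T₀ := by
      intro hmem
      rw [hT₀, Finset.mem_insert] at hmem
      rcases hmem with heq | hmem
      · have h2 := congrFun heq 1
        rw [hy1] at h2
        rw [hco1] at h2
        exact hne h2
      · rw [hLmem, hco1] at hmem
        exact hy''T (by rw [hT₀]; exact Finset.mem_insert_of_mem ((hLmem y'').2 hmem))
    have h3 : y'' + (y'' 1 - 1) • x ∈ B₀ \ T₀ := Finset.mem_sdiff.2 ⟨h1, hmem⟩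
    rw [hy'', Finset.mem_singleton] at h3
    have h4 := congrFun h3 0
    simp only [Pi.add_apply, Pi.smul_apply, smul_eq_mul, hx0, mul_one] at h4
    exact hne (by linear_combination h4)
  set d : K := y'' 0 with hd
  have hy''eq : y'' = y + d • x := by
    funext i
    fin_cases i
    · show y'' 0 = y 0 + d * x 0
      rw [hy0, hx0, ← hd]; ring
    · show y'' 1 = y 1 + d * x 1
      rw [hy1, hx1, hy''1]; ring
  have hd0 : d ≠ 0 := by
    intro h
    apply hy''T
    rw [hT₀, hy''eq, h]
    simp
  -- choose the scalars c and e
  have hcd : ∃ c : K, c ≠ 0 ∧ c ≠ d := by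
    have h0d : ({0, d} : Finset K).card ≤ 2 :=
      (Finset.card_insert_le _ _).trans (by simp)
    have hpos : 0 < (Finset.univ \ ({0, d} : Finset K)).card := by
      rw [Finset.card_sdiff_of_subset (Finset.subset_univ _), Finset.card_univ, hK4]
      omega
    obtain ⟨c, hc⟩ := Finset.card_pos.1 hpos
    rw [Finset.mem_sdiff] at hc
    simp only [Finset.mem_insert, Finset.mem_singleton, not_or] at hc
    exact ⟨c, hc.2.1, hc.2.2⟩
  obtain ⟨c, hc0, hcd'⟩ := hcd
  obtain ⟨e, he0, he1⟩ := exists_c0 (K := K) (by omega)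
  -- coordinates of the configuration points
  have hex0 : (e • x) 0 = e := by simp [hx0]
  have hex1 : (e • x) 1 = 0 := by simp [hx1]
  have hyc0 : (y + c • x) 0 = c := by simp [hy0, hx0]
  have hyc1 : (y + c • x) 1 = 1 := by simp [hy1, hx1]
  -- the second five-point configuration
  set P : Finset (Fin 2 → K) := {0, x, e • x, y, y + c • x} with hP
  have n0x : (0 : Fin 2 → K) ≠ x := by
    intro h; have := congrFun h 0; rw [hx0] at this; exact h1K this.symm
  have n0e : (0 : Fin 2 → K) ≠ e • x := by
    intro h; have := congrFun h 0; rw [hex0] at this; exact he0 this.symm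
  have n0y : (0 : Fin 2 → K) ≠ y := by
    intro h; have := congrFun h 1; rw [hy1] at this; exact h1K this.symm
  have n0yc : (0 : Fin 2 → K) ≠ y + c • x := by
    intro h; have := congrFun h 1; rw [hyc1] at this; exact h1K this.symm
  have nxe : x ≠ e • x := by
    intro h; have := congrFun h 0; rw [hx0, hex0] at this; exact he1 this.symm
  have nxy : x ≠ y := by
    intro h; have := congrFun h 1; rw [hx1, hy1] at this; exact h1K this.symm
  have nxyc : x ≠ y + c • x := by
    intro h; have := congrFun h 1; rw [hx1, hyc1] at this; exact h1K this.symm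
  have ney : e • x ≠ y := by
    intro h; have := congrFun h 1; rw [hex1, hy1] at this; exact h1K this.symm
  have neyc : e • x ≠ y + c • x := by
    intro h; have := congrFun h 1; rw [hex1, hyc1] at this; exact h1K this.symm
  have nyyc : y ≠ y + c • x := by
    intro h; have := congrFun h 0; rw [hy0, hyc0] at this; exact hc0 this.symm
  have hPcard : P.card = 5 := by
    rw [hP, Finset.card_insert_of_notMem (by simp [n0x, n0e, n0y, n0yc]),
      Finset.card_insert_of_notMem (by simp [nxe, nxy, nxyc]),
      Finset.card_insert_of_notMem (by simp [ney, neyc]),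
      Finset.card_insert_of_notMem (by simp [nyyc]), Finset.card_singleton]
  obtain ⟨Bc, hBcB, hPBc⟩ := block_exists hdesign hPcard
  obtain ⟨g, hgG, hgim⟩ := hGbt B₀ hB₀B Bc hBcB
  obtain ⟨σ, f, u, hsem, hgx⟩ := haffine g hgG
  set A : Finset (Fin 2 → K) := L.image (⇑g) with hA
  have hAcard : A.card = 4 := by
    rw [hA, Finset.card_image_of_injective _ g.injective, hLcard]
  have hAform : ∀ z ∈ A, ∃ c' : K, z = c' • f x + u := by
    intro z hz
    rw [hA, Finset.mem_image] at hz
    obtain ⟨w, hw, rfl⟩ := hz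
    rw [hL, Finset.mem_image] at hw
    obtain ⟨c₀, -, rfl⟩ := hw
    exact ⟨σ c₀, by rw [hgx, hsem]⟩
  have hBc2 : Bc = insert (g y'') (insert (g y) A) := by
    rw [← hgim, hB₀eq, hT₀, Finset.image_insert, Finset.image_insert, hA]
  -- at least three of the five points of P lie in A
  have hPsd : P \ A ⊆ {g y'', g y} := by
    intro z hz
    rw [Finset.mem_sdiff] at hz
    have hzBc : z ∈ Bc := hPBc hz.1
    rw [hBc2, Finset.mem_insert, Finset.mem_insert] at hzBc
    rcases hzBc with rfl | rfl | hzA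
    · exact Finset.mem_insert_self _ _
    · exact Finset.mem_insert_of_mem (Finset.mem_singleton_self _)
    · exact absurd hzA hz.2
  have hPA3 : 3 ≤ (P ∩ A).card := by
    have h1 : (P \ A).card ≤ 2 :=
      (Finset.card_le_card hPsd).trans ((Finset.card_insert_le _ _).trans (by simp))
    have h2 : (P \ A).card + (P ∩ A).card = P.card := Finset.card_sdiff_add_card_inter P A
    omega
  obtain ⟨T3, hT3sub, hT3card⟩ := Finset.exists_subset_card_eq hPA3
  obtain ⟨z₁, z₂, z₃, h12, h13, h23, hT3⟩ := Finset.card_eq_three.1 hT3card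
  have hz₁PA : z₁ ∈ P ∩ A := hT3sub (by rw [hT3]; simp)
  have hz₂PA : z₂ ∈ P ∩ A := hT3sub (by rw [hT3]; simp)
  have hz₃PA : z₃ ∈ P ∩ A := hT3sub (by rw [hT3]; simp)
  obtain ⟨c₁, hc₁⟩ := hAform z₁ (Finset.mem_of_mem_inter_right hz₁PA)
  obtain ⟨c₂, hc₂⟩ := hAform z₂ (Finset.mem_of_mem_inter_right hz₂PA)
  obtain ⟨c₃, hc₃⟩ := hAform z₃ (Finset.mem_of_mem_inter_right hz₃PA)
  have hP1 : ∀ z ∈ P, z 1 = 0 ∨ z 1 = 1 := by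
    intro z hz
    rw [hP] at hz
    simp only [Finset.mem_insert, Finset.mem_singleton] at hz
    rcases hz with rfl | rfl | rfl | rfl | rfl
    · exact Or.inl rfl
    · exact Or.inl hx1
    · exact Or.inl hex1
    · exact Or.inr hy1
    · exact Or.inr hyc1
  have hfx1 : f x 1 = 0 := by
    by_contra hfx
    have hkey : ∀ (zi zj : Fin 2 → K) (ci cj : K), zi = ci • f x + u → zj = cj • f x + u →
        zi ≠ zj → zi 1 ≠ zj 1 := by
      intro zi zj ci cj hi hj hne heq
      apply hne
      have hcij : ci = cj := by
        rw [hi, hj] at heq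
        simp only [Pi.add_apply, Pi.smul_apply, smul_eq_mul] at heq
        have h5 : (ci - cj) * f x 1 = 0 := by linear_combination heq
        rcases mul_eq_zero.1 h5 with h6 | h6
        · linear_combination h6
        · exact absurd h6 hfx
      rw [hi, hj, hcij]
    have hd12 : z₁ 1 ≠ z₂ 1 := hkey z₁ z₂ c₁ c₂ hc₁ hc₂ h12
    have hd13 : z₁ 1 ≠ z₃ 1 := hkey z₁ z₃ c₁ c₃ hc₁ hc₃ h13
    have hd23 : z₂ 1 ≠ z₃ 1 := hkey z₂ z₃ c₂ c₃ hc₂ hc₃ h23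
    rcases hP1 z₁ (Finset.mem_of_mem_inter_left hz₁PA) with e1 | e1 <;>
      rcases hP1 z₂ (Finset.mem_of_mem_inter_left hz₂PA) with e2 | e2 <;>
      rcases hP1 z₃ (Finset.mem_of_mem_inter_left hz₃PA) with e3 | e3 <;>
      first
        | exact hd12 (e1.trans e2.symm)
        | exact hd13 (e1.trans e3.symm)
        | exact hd23 (e2.trans e3.symm)
  have hAco : ∀ z ∈ A, z 1 = u 1 := by
    intro z hz
    obtain ⟨c', rfl⟩ := hAform z hz
    simp [hfx1]
  have hu1 : u 1 = 0 := by
    by_contra hu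
    -- then each zᵢ is y or y + c • x
    have htwo : ∀ z ∈ P ∩ A, z = y ∨ z = y + c • x := by
      intro z hz
      have hz1 : z 1 = u 1 := hAco z (Finset.mem_of_mem_inter_right hz)
      have hzP := (Finset.mem_of_mem_inter_left hz)
      rw [hP] at hzP
      simp only [Finset.mem_insert, Finset.mem_singleton] at hzP
      rcases hzP with rfl | rfl | rfl | rfl | rfl
      · exact absurd hz1.symm hu
      · rw [hx1] at hz1; exact absurd hz1.symm hu
      · rw [hex1] at hz1; exact absurd hz1.symm hu
      · exact Or.inl rfl
      · exact Or.inr rfl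
    rcases htwo z₁ hz₁PA with f1 | f1 <;> rcases htwo z₂ hz₂PA with f2 | f2 <;>
      rcases htwo z₃ hz₃PA with f3 | f3 <;>
      first
        | exact h12 (f1.trans f2.symm)
        | exact h13 (f1.trans f3.symm)
        | exact h23 (f2.trans f3.symm)
  have hAL : A = L := by
    apply Finset.eq_of_subset_of_card_le
    · intro z hz
      rw [hLmem]
      rw [hAco z hz, hu1]
    · rw [hAcard, hLcard]
  have hT₀Bc : T₀ ⊆ Bc := by
    rw [hT₀]
    intro w hw
    rcases Finset.mem_insert.1 hw with rfl | hwL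
    · exact hPBc (by rw [hP]; simp)
    · rw [← hAL] at hwL
      rw [hBc2]
      exact Finset.mem_insert_of_mem (Finset.mem_insert_of_mem hwL)
  have hBcB₀ : Bc = B₀ := block_unique hdesign hT₀card hBcB hB₀B hT₀Bc hT₀B₀
  have hycx : y + c • x ∈ B₀ := by
    rw [← hBcB₀]
    exact hPBc (by rw [hP]; simp)
  rw [hB₀eq, Finset.mem_insert] at hycx
  rcases hycx with heq | hycx
  · rw [hy''eq] at heq
    have := congrFun heq 0
    rw [hyc0] at this
    simp [hy0, hx0] at this
    exact hcd' this
  · rw [hT₀, Finset.mem_insert] at hycx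
    rcases hycx with heq | hycx
    · exact nyyc heq.symm
    · rw [hLmem, hyc1] at hycx
      exact h1K hycx


end Bespoke


/-- Let `q = p^a` be a prime power, `m ≥ 2`, `V = GF(q)^m` (so `v = q^m`).
Let `G` be a group of permutations of `V` consisting of affine transformations
`x ↦ g(x) + u` (`g` an invertible `p`-semilinear map fixing `0`, `u ∈ V`) containing all
translations, such that the stabilizer `G₀` of `0` contains `SL(m,q)` (in its natural
action on `V`) as a normal subgroup. Then there is no non-trivial Steiner 4-design and no
non-trivial Steiner 5-design on `V` admitting `G` as a block-transitive group of
automorphisms. -/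
theorem stmt_16 {K : Type*} [Field K] [Fintype K] [DecidableEq K]
    (p a : ℕ) (hp : p.Prime) (ha : 0 < a) (hq : Fintype.card K = p ^ a)
    (m : ℕ) (hm : 2 ≤ m)
    (G : Subgroup (Equiv.Perm (Fin m → K)))
    (haffine : ∀ g ∈ G, ∃ (σ : K ≃+* K) (f : (Fin m → K) ≃+ (Fin m → K)) (u : Fin m → K),
      (∀ (c : K) (x : Fin m → K), f (c • x) = σ c • f x) ∧
      ∀ x : Fin m → K, (g : Equiv.Perm (Fin m → K)) x = f x + u)
    (htransl : ∀ u : Fin m → K, Equiv.addLeft u ∈ G)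
    (hSLsub : ∀ s ∈ slPerm m K, s ∈ G ∧ s 0 = 0)
    (hSLnormal : ∀ g ∈ G, (g : Equiv.Perm (Fin m → K)) 0 = 0 →
      ∀ s ∈ slPerm m K, g * s * g⁻¹ ∈ slPerm m K)
    (t k : ℕ) (ht : t = 4 ∨ t = 5) (htk : t < k) (hkv : k < Fintype.card (Fin m → K))
    (B : Finset (Finset (Fin m → K)))
    (hblocks : ∀ b ∈ B, b.card = k)
    (hdesign : ∀ T : Finset (Fin m → K), T.card = t → (B.filter (fun b => T ⊆ b)).card = 1)
    (hGaut : ∀ g ∈ G, ∀ b ∈ B, b.image (⇑g) ∈ B)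
    (hGbt : ∀ b₁ ∈ B, ∀ b₂ ∈ B, ∃ g ∈ G, b₁.image (⇑g) = b₂) :
    False := by
  classical
  have hq2 : 2 ≤ Fintype.card K := Fintype.one_lt_card
  have hv : Fintype.card (Fin m → K) = Fintype.card K ^ m := by
    rw [Fintype.card_fun, Fintype.card_fin]
  have h0m : 0 < m := by omega
  have h1m : 1 < m := by omega
  set i0 : Fin m := ⟨0, h0m⟩ with hi0
  set i1 : Fin m := ⟨1, h1m⟩ with hi1
  have hi01 : i0 ≠ i1 := by simp [hi0, hi1, Fin.ext_iff]
  have pick1 : ∀ j : Fin m, ∃ a : Fin m, a ≠ j := by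
    intro j
    by_cases h : j = i0
    · exact ⟨i1, by rw [h]; exact hi01.symm⟩
    · exact ⟨i0, fun hh => h hh.symm⟩
  rcases ht with rfl | rfl
  · -- t = 4
    by_cases hq4 : 4 ≤ Fintype.card K
    · -- r = 1
      have HT1 : ∀ j : Fin m, ∃ S : Finset (Fin m → K), S.card = 4 ∧ ∀ x ∈ S, x j = 0 := by
        intro j
        obtain ⟨i, hij⟩ := pick1 j
        obtain ⟨S, hcard, hsupp⟩ := pattern_line i 4 hq4
        exact ⟨S, hcard, fun x hx => hsupp x hx j (fun hh => hij hh.symm)⟩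
      obtain ⟨S₂, hS₂c, hS₂s⟩ := pattern_line i0 4 hq4
      obtain ⟨S₁, hS₁c, hS₁supp, hS₁0, hS₁e0, hS₁e1⟩ := pattern_B (K := K) i0 i1 hi01
      refine general_branch hm haffine htransl hSLsub hblocks hdesign hGaut hGbt hkv
        (by omega) HT1 {i0} {i0, i1} ?_ S₂ hS₂c ?_ S₁ hS₁c hS₁0 ?_
      · rw [Finset.card_singleton,
          Finset.card_insert_of_notMem (by simp [hi01]), Finset.card_singleton]
        omega
      · intro x hx j hj
        exact hS₂s x hx j (fun hh => hj (by simp [hh]))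
      · intro i hi
        rcases Finset.mem_insert.1 hi with rfl | hi
        · exact hS₁e0
        · rw [Finset.mem_singleton.1 hi]; exact hS₁e1
    · -- q ∈ {2,3}
      by_cases h3m : 3 ≤ m
      · -- r = 2
        have h2m : 2 < m := by omega
        set i2 : Fin m := ⟨2, h2m⟩ with hi2
        have hi02 : i0 ≠ i2 := by simp [hi0, hi2, Fin.ext_iff]
        have hi12 : i1 ≠ i2 := by simp [hi1, hi2, Fin.ext_iff]
        have pick2 : ∀ j : Fin m, ∃ a b : Fin m, a ≠ b ∧ a ≠ j ∧ b ≠ j := by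
          intro j
          by_cases h0 : j = i0
          · subst h0
            exact ⟨i1, i2, hi12, hi01.symm, hi02.symm⟩
          · by_cases h1 : j = i1
            · subst h1
              exact ⟨i0, i2, hi02, fun hh => h0 hh.symm, hi12.symm⟩
            · exact ⟨i0, i1, hi01, fun hh => h0 hh.symm, fun hh => h1 hh.symm⟩
        have HT1 : ∀ j : Fin m, ∃ S : Finset (Fin m → K), S.card = 4 ∧ ∀ x ∈ S, x j = 0 := by
          intro j
          obtain ⟨a', b', hab, haj, hbj⟩ := pick2 j
          obtain ⟨S, hcard, hsupp, -, -, -⟩ := pattern_B (K := K) a' b' hab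
          exact ⟨S, hcard, fun x hx =>
            hsupp x hx j (fun hh => haj hh.symm) (fun hh => hbj hh.symm)⟩
        obtain ⟨S₂, hS₂c, hS₂s, -, -, -⟩ := pattern_B (K := K) i0 i1 hi01
        obtain ⟨S₁, hS₁c, hS₁0, hS₁e0, hS₁e1, hS₁e2⟩ := pattern_E (K := K) i0 i1 i2 hi01 hi02 hi12
        refine general_branch hm haffine htransl hSLsub hblocks hdesign hGaut hGbt hkv
          (by omega) HT1 {i0, i1} {i0, i1, i2} ?_ S₂ hS₂c ?_ S₁ hS₁c hS₁0 ?_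
        · rw [Finset.card_insert_of_notMem (by simp [hi01]), Finset.card_singleton,
            Finset.card_insert_of_notMem (by simp [hi01, hi02]),
            Finset.card_insert_of_notMem (by simp [hi12]), Finset.card_singleton]
          omega
        · intro x hx j hj
          simp only [Finset.mem_insert, Finset.mem_singleton, not_or] at hj
          exact hS₂s x hx j (fun hh => hj.1 (by simp [hh])) (fun hh => hj.2 (by simp [hh]))
        · intro i hi
          simp only [Finset.mem_insert, Finset.mem_singleton] at hi
          rcases hi with rfl | rfl | rfl
          · exact hS₁e0
          · exact hS₁e1
          · exact hS₁e2
      · -- m = 2, q ∈ {2,3}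
        have hm2 : m = 2 := by omega
        rcases (by omega : Fintype.card K = 2 ∨ Fintype.card K = 3) with hqq | hqq
        · -- v = 4
          rw [hv, hqq, hm2] at hkv
          norm_num at hkv
          omega
        · -- v = 9
          have hv9 : Fintype.card (Fin m → K) = 9 := by rw [hv, hqq, hm2]; norm_num
          obtain ⟨l0, e0⟩ := lambda_eq hblocks hdesign 0 (by omega) (by omega)
          obtain ⟨l2, e2⟩ := lambda_eq hblocks hdesign 2 (by omega) (by omega)
          rw [hv9] at e0 e2 hkv
          simp only [Nat.sub_zero] at e0
          interval_cases k <;> norm_num [Nat.choose] at e0 e2 <;> omega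
  · -- t = 5
    by_cases hq5 : 5 ≤ Fintype.card K
    · -- r = 1
      have HT1 : ∀ j : Fin m, ∃ S : Finset (Fin m → K), S.card = 5 ∧ ∀ x ∈ S, x j = 0 := by
        intro j
        obtain ⟨i, hij⟩ := pick1 j
        obtain ⟨S, hcard, hsupp⟩ := pattern_line i 5 hq5
        exact ⟨S, hcard, fun x hx => hsupp x hx j (fun hh => hij hh.symm)⟩
      obtain ⟨S₂, hS₂c, hS₂s⟩ := pattern_line i0 5 hq5
      obtain ⟨S₁, hS₁c, hS₁supp, hS₁0, hS₁e0, hS₁e1⟩ := pattern_C (K := K) i0 i1 hi01 (by omega)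
      refine general_branch hm haffine htransl hSLsub hblocks hdesign hGaut hGbt hkv
        (by omega) HT1 {i0} {i0, i1} ?_ S₂ hS₂c ?_ S₁ hS₁c hS₁0 ?_
      · rw [Finset.card_singleton,
          Finset.card_insert_of_notMem (by simp [hi01]), Finset.card_singleton]
        omega
      · intro x hx j hj
        exact hS₂s x hx j (fun hh => hj (by simp [hh]))
      · intro i hi
        rcases Finset.mem_insert.1 hi with rfl | hi
        · exact hS₁e0
        · rw [Finset.mem_singleton.1 hi]; exact hS₁e1
    · by_cases hq3 : 3 ≤ Fintype.card K
      · -- q ∈ {3,4}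
        by_cases h3m : 3 ≤ m
        · -- r = 2
          have h2m : 2 < m := by omega
          set i2 : Fin m := ⟨2, h2m⟩ with hi2
          have hi02 : i0 ≠ i2 := by simp [hi0, hi2, Fin.ext_iff]
          have hi12 : i1 ≠ i2 := by simp [hi1, hi2, Fin.ext_iff]
          have pick2 : ∀ j : Fin m, ∃ a b : Fin m, a ≠ b ∧ a ≠ j ∧ b ≠ j := by
            intro j
            by_cases h0 : j = i0
            · subst h0
              exact ⟨i1, i2, hi12, hi01.symm, hi02.symm⟩
            · by_cases h1 : j = i1
              · subst h1
                exact ⟨i0, i2, hi02, fun hh => h0 hh.symm, hi12.symm⟩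
              · exact ⟨i0, i1, hi01, fun hh => h0 hh.symm, fun hh => h1 hh.symm⟩
          have HT1 : ∀ j : Fin m, ∃ S : Finset (Fin m → K), S.card = 5 ∧ ∀ x ∈ S, x j = 0 := by
            intro j
            obtain ⟨a', b', hab, haj, hbj⟩ := pick2 j
            obtain ⟨S, hcard, hsupp, -, -, -⟩ := pattern_C a' b' hab hq3
            exact ⟨S, hcard, fun x hx =>
              hsupp x hx j (fun hh => haj hh.symm) (fun hh => hbj hh.symm)⟩
          obtain ⟨S₂, hS₂c, hS₂s, -, -, -⟩ := pattern_C i0 i1 hi01 hq3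
          obtain ⟨S₁, hS₁c, hS₁supp, hS₁0, hS₁e0, hS₁e1, hS₁e2⟩ :=
            pattern_D (K := K) i0 i1 i2 hi01 hi02 hi12
          refine general_branch hm haffine htransl hSLsub hblocks hdesign hGaut hGbt hkv
            (by omega) HT1 {i0, i1} {i0, i1, i2} ?_ S₂ hS₂c ?_ S₁ hS₁c hS₁0 ?_
          · rw [Finset.card_insert_of_notMem (by simp [hi01]), Finset.card_singleton,
              Finset.card_insert_of_notMem (by simp [hi01, hi02]),
              Finset.card_insert_of_notMem (by simp [hi12]), Finset.card_singleton]
            omega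
          · intro x hx j hj
            simp only [Finset.mem_insert, Finset.mem_singleton, not_or] at hj
            exact hS₂s x hx j (fun hh => hj.1 (by simp [hh])) (fun hh => hj.2 (by simp [hh]))
          · intro i hi
            simp only [Finset.mem_insert, Finset.mem_singleton] at hi
            rcases hi with rfl | rfl | rfl
            · exact hS₁e0
            · exact hS₁e1
            · exact hS₁e2
        · -- m = 2, q ∈ {3,4}
          have hm2 : m = 2 := by omega
          rcases (by omega : Fintype.card K = 3 ∨ Fintype.card K = 4) with hqq | hqq
          · -- v = 9 : k - 4 divides 5 with 1 < k - 4 < 5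
            have hv9 : Fintype.card (Fin m → K) = 9 := by rw [hv, hqq, hm2]; norm_num
            obtain ⟨l4, e4⟩ := lambda_eq hblocks hdesign 4 (by omega) (by omega)
            rw [hv9] at e4 hkv
            interval_cases k <;> norm_num [Nat.choose] at e4 <;> omega
          · -- v = 16
            have hv16 : Fintype.card (Fin m → K) = 16 := by rw [hv, hqq, hm2]; norm_num
            obtain ⟨l0, e0⟩ := lambda_eq hblocks hdesign 0 (by omega) (by omega)
            obtain ⟨l2, e2⟩ := lambda_eq hblocks hdesign 2 (by omega) (by omega)
            obtain ⟨l3, e3⟩ := lambda_eq hblocks hdesign 3 (by omega) (by omega)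
            obtain ⟨l4, e4⟩ := lambda_eq hblocks hdesign 4 (by omega) (by omega)
            rw [hv16] at e0 e2 e3 e4 hkv
            simp only [Nat.sub_zero] at e0
            have hk6 : k = 6 := by
              interval_cases k <;> norm_num [Nat.choose] at e0 e2 e3 e4 ⊢ <;> omega
            subst hk6 hm2
            exact bespoke16 hqq haffine htransl hSLsub hblocks hdesign hGaut hGbt
      · -- q = 2
        have hqq : Fintype.card K = 2 := by omega
        by_cases h4m : 4 ≤ m
        · -- r = 3
          have h2m : 2 < m := by omega
          have h3m' : 3 < m := by omega
          set i2 : Fin m := ⟨2, h2m⟩ with hi2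
          set i3 : Fin m := ⟨3, h3m'⟩ with hi3
          have hi02 : i0 ≠ i2 := by simp [hi0, hi2, Fin.ext_iff]
          have hi12 : i1 ≠ i2 := by simp [hi1, hi2, Fin.ext_iff]
          have hi03 : i0 ≠ i3 := by simp [hi0, hi3, Fin.ext_iff]
          have hi13 : i1 ≠ i3 := by simp [hi1, hi3, Fin.ext_iff]
          have hi23 : i2 ≠ i3 := by simp [hi2, hi3, Fin.ext_iff]
          have pick3 : ∀ j : Fin m, ∃ a b c : Fin m,
              a ≠ b ∧ a ≠ c ∧ b ≠ c ∧ a ≠ j ∧ b ≠ j ∧ c ≠ j := by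
            intro j
            by_cases h0 : j = i0
            · subst h0
              exact ⟨i1, i2, i3, hi12, hi13, hi23, hi01.symm, hi02.symm, hi03.symm⟩
            · by_cases h1 : j = i1
              · subst h1
                exact ⟨i0, i2, i3, hi02, hi03, hi23, fun hh => h0 hh.symm, hi12.symm,
                  hi13.symm⟩
              · by_cases h2 : j = i2
                · subst h2
                  exact ⟨i0, i1, i3, hi01, hi03, hi13, fun hh => h0 hh.symm,
                    fun hh => h1 hh.symm, hi23.symm⟩
                · exact ⟨i0, i1, i2, hi01, hi02, hi12, fun hh => h0 hh.symm,
                    fun hh => h1 hh.symm, fun hh => h2 hh.symm⟩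
          have HT1 : ∀ j : Fin m, ∃ S : Finset (Fin m → K), S.card = 5 ∧ ∀ x ∈ S, x j = 0 := by
            intro j
            obtain ⟨a', b', c', hab, hac, hbc, haj, hbj, hcj⟩ := pick3 j
            obtain ⟨S, hcard, hsupp, -, -, -, -⟩ := pattern_D (K := K) a' b' c' hab hac hbc
            exact ⟨S, hcard, fun x hx => hsupp x hx j (fun hh => haj hh.symm)
              (fun hh => hbj hh.symm) (fun hh => hcj hh.symm)⟩
          obtain ⟨S₂, hS₂c, hS₂s, -, -, -, -⟩ := pattern_D (K := K) i0 i1 i2 hi01 hi02 hi12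
          obtain ⟨S₁, hS₁c, hS₁0, hS₁e0, hS₁e1, hS₁e2, hS₁e3⟩ :=
            pattern_F (K := K) i0 i1 i2 i3 hi01 hi02 hi03 hi12 hi13 hi23
          refine general_branch hm haffine htransl hSLsub hblocks hdesign hGaut hGbt hkv
            (by omega) HT1 {i0, i1, i2} {i0, i1, i2, i3} ?_ S₂ hS₂c ?_ S₁ hS₁c hS₁0 ?_
          · rw [Finset.card_insert_of_notMem (by simp [hi01, hi02]),
              Finset.card_insert_of_notMem (by simp [hi12]), Finset.card_singleton,
              Finset.card_insert_of_notMem (by simp [hi01, hi02, hi03]),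
              Finset.card_insert_of_notMem (by simp [hi12, hi13]),
              Finset.card_insert_of_notMem (by simp [hi23]), Finset.card_singleton]
            omega
          · intro x hx j hj
            simp only [Finset.mem_insert, Finset.mem_singleton, not_or] at hj
            exact hS₂s x hx j (fun hh => hj.1 (by simp [hh]))
              (fun hh => hj.2.1 (by simp [hh])) (fun hh => hj.2.2 (by simp [hh]))
          · intro i hi
            simp only [Finset.mem_insert, Finset.mem_singleton] at hi
            rcases hi with rfl | rfl | rfl | rfl
            · exact hS₁e0
            · exact hS₁e1
            · exact hS₁e2
            · exact hS₁e3
        · -- q = 2, m ∈ {2,3}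
          rcases (by omega : m = 2 ∨ m = 3) with hm2 | hm3
          · -- v = 4
            rw [hv, hqq, hm2] at hkv
            norm_num at hkv
            omega
          · -- v = 8
            have hv8 : Fintype.card (Fin m → K) = 8 := by rw [hv, hqq, hm3]; norm_num
            obtain ⟨l0, e0⟩ := lambda_eq hblocks hdesign 0 (by omega) (by omega)
            rw [hv8] at e0 hkv
            simp only [Nat.sub_zero] at e0
            interval_cases k <;> norm_num [Nat.choose] at e0 <;> omega
end
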